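/- arXiv:0901.0686 — 9 statements merged into one kernel-verified Lean document; each statement's English description precedes it below -/
import Mathlib

section
/- Let k be a field and let g ∈ k[x_1,…,x_d] factor as g = h·q where h is irreducible and h does not divide q. Suppose the hypersurface ring R = k[z,x_1,…,x_d]/(z^n − g) (n ≥ 1) is a normal domain. Then the ideal of R generated by the images of z and h is a prime ideal of height one. -/
open Polynomial

private theorem divisor_class_aux {A : Type*} [CommRing A] [IsDomain A]
    [UniqueFactorizationMonoid A] {n : ℕ} (hn : 1 ≤ n)
    (g h q : A) (hirr : Irreducible h) (hg : g = h * q)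
    [IsDomain (Polynomial A ⧸ Ideal.span {Polynomial.X ^ n - Polynomial.C g})] :
    ∃ hp : (Ideal.span
        {Ideal.Quotient.mk (Ideal.span {Polynomial.X ^ n - Polynomial.C g}) Polynomial.X,
         Ideal.Quotient.mk (Ideal.span {Polynomial.X ^ n - Polynomial.C g}) (Polynomial.C h)} :
        Ideal (Polynomial A ⧸ Ideal.span {Polynomial.X ^ n - Polynomial.C g})).IsPrime,
      Order.height (⟨_, hp⟩ : PrimeSpectrum (Polynomial A ⧸
        Ideal.span {Polynomial.X ^ n - Polynomial.C g})) = 1 := by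
  classical
  set f₀ : Polynomial A := Polynomial.X ^ n - Polynomial.C g with hf₀def
  set I : Ideal (Polynomial A) := Ideal.span {f₀} with hIdef
  set π : Polynomial A →+* (Polynomial A ⧸ I) := Ideal.Quotient.mk I with hπdef
  -- basic facts
  have hmonic : f₀.Monic := monic_X_pow_sub_C g (by omega)
  have hIprime : I.IsPrime := (Ideal.Quotient.isDomain_iff_prime I).mp ‹_›
  have hf₀prime : Prime f₀ := (Ideal.span_singleton_prime hmonic.ne_zero).mp hIprime
  have hprimeh : Prime h := UniqueFactorizationMonoid.irreducible_iff_prime.mp hirr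
  have hspanh : (Ideal.span {h} : Ideal A).IsPrime :=
    (Ideal.span_singleton_prime hirr.ne_zero).mpr hprimeh
  haveI : IsDomain (A ⧸ (Ideal.span {h} : Ideal A)) :=
    (Ideal.Quotient.isDomain_iff_prime _).mpr hspanh
  -- the map ψ : A[X] → A/(h), X ↦ 0
  set ψ : Polynomial A →+* A ⧸ (Ideal.span {h} : Ideal A) :=
    Polynomial.eval₂RingHom (Ideal.Quotient.mk _) 0 with hψdef
  set J : Ideal (Polynomial A) := Ideal.span {Polynomial.X, Polynomial.C h} with hJdef
  have hXJ : (Polynomial.X : Polynomial A) ∈ J := Ideal.subset_span (by simp)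
  have hChJ : (Polynomial.C h : Polynomial A) ∈ J := Ideal.subset_span (by simp)
  have hkerψ : RingHom.ker ψ = J := by
    apply le_antisymm
    · intro p hp
      have hp0 : ψ p = 0 := hp
      rw [hψdef, coe_eval₂RingHom, eval₂_at_zero, Ideal.Quotient.eq_zero_iff_mem,
        Ideal.mem_span_singleton] at hp0
      obtain ⟨c, hc⟩ := hp0
      have heq := Polynomial.X_mul_divX_add p
      have : Polynomial.X * p.divX + Polynomial.C (p.coeff 0) ∈ J := by
        apply Ideal.add_mem
        · exact Ideal.mul_mem_right _ _ hXJ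
        · rw [hc, map_mul]; exact Ideal.mul_mem_right _ _ hChJ
      rwa [heq] at this
    · rw [hJdef, Ideal.span_le]
      rintro x (rfl | rfl)
      · show ψ Polynomial.X = 0
        simp [hψdef]
      · show ψ (Polynomial.C h) = 0
        simp [hψdef, Ideal.Quotient.eq_zero_iff_mem, Ideal.mem_span_singleton]
  have hJprime : J.IsPrime := hkerψ ▸ RingHom.ker_isPrime ψ
  have hIJ : I ≤ J := by
    rw [hIdef, Ideal.span_le]
    rintro x rfl
    have h1 : (Polynomial.X : Polynomial A) ^ n ∈ J := Ideal.pow_mem_of_mem J hXJ n (by omega)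
    have h2 : (Polynomial.C g : Polynomial A) ∈ J := by
      rw [hg, map_mul]; exact Ideal.mul_mem_right _ _ hChJ
    exact Ideal.sub_mem J h1 h2
  have hkerπ : RingHom.ker π = I := Ideal.mk_ker
  have hsurj : Function.Surjective π := Ideal.Quotient.mk_surjective
  set P : Ideal (Polynomial A ⧸ I) := Ideal.span {π Polynomial.X, π (Polynomial.C h)} with hPdef
  have hmapJ : Ideal.map π J = P := by
    rw [hJdef, Ideal.map_span, Set.image_insert_eq, Set.image_singleton]
  have hPprime : P.IsPrime := by
    rw [← hmapJ]
    exact Ideal.map_isPrime_of_surjective hsurj (hkerπ.trans_le hIJ)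
  have hcomapP : Ideal.comap π P = J := by
    rw [← hmapJ, Ideal.comap_map_of_surjective π hsurj, ← RingHom.ker_eq_comap_bot, hkerπ]
    exact sup_eq_left.mpr hIJ
  have hmemP : ∀ a : A, π (Polynomial.C a) ∈ P ↔ h ∣ a := by
    intro a
    constructor
    · intro ha
      have h1 : Polynomial.C a ∈ J := by rw [← hcomapP]; exact ha
      rw [← hkerψ] at h1
      have h2 : ψ (Polynomial.C a) = 0 := h1
      rwa [hψdef, coe_eval₂RingHom, eval₂_C, Ideal.Quotient.eq_zero_iff_mem,
        Ideal.mem_span_singleton] at h2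
    · rintro ⟨c, rfl⟩
      rw [map_mul, map_mul]
      exact Ideal.mul_mem_right _ _ (Ideal.subset_span (by simp))
  have hPne : P ≠ ⊥ := by
    intro hbot
    have h1 : π (Polynomial.C h) = 0 := by
      have h2 : π (Polynomial.C h) ∈ P := Ideal.subset_span (by simp)
      rwa [hbot, Ideal.mem_bot] at h2
    rw [hπdef, Ideal.Quotient.eq_zero_iff_mem, hIdef, Ideal.mem_span_singleton] at h1
    have hCh : (Polynomial.C h : Polynomial A) ≠ 0 := by
      simpa using hirr.ne_zero
    have h3 := Polynomial.natDegree_le_of_dvd h1 hCh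
    rw [hf₀def, natDegree_X_pow_sub_C, Polynomial.natDegree_C] at h3
    omega
  -- the "norm" lemma
  have hnorm : ∀ F : Polynomial A, π F ≠ 0 →
      ∃ a : A, a ≠ 0 ∧ π (Polynomial.C a) ∈ Ideal.span {π F} := by
    intro F hF
    set K := FractionRing A
    set φ : A →+* K := algebraMap A K with hφdef
    have hφinj : Function.Injective φ := IsFractionRing.injective A K
    have hmapinj : Function.Injective (Polynomial.map φ) := Polynomial.map_injective φ hφinj
    have hndvdF : ¬ f₀ ∣ F := by
      intro hdvd
      exact hF (by rwa [hπdef, Ideal.Quotient.eq_zero_iff_mem, hIdef, Ideal.mem_span_singleton])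
    have hirr' : Irreducible (f₀.map φ) :=
      (hmonic.irreducible_iff_irreducible_map_fraction_map (K := K)).mp hf₀prime.irreducible
    have hndvd' : ¬ f₀.map φ ∣ F.map φ := by
      intro hdvd
      have hrem : f₀.map φ ∣ (F %ₘ f₀).map φ := by
        have h2 : (F %ₘ f₀).map φ = F.map φ - f₀.map φ * (F /ₘ f₀).map φ := by
          rw [modByMonic_eq_sub_mul_div F f₀]; simp
        rw [h2]
        exact dvd_sub hdvd (dvd_mul_right _ _)
      have hdeg : ((F %ₘ f₀).map φ).degree < (f₀.map φ).degree := by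
        rw [hmonic.degree_map]
        exact lt_of_le_of_lt (Polynomial.degree_map_le) (degree_modByMonic_lt F hmonic)
      have h0 : (F %ₘ f₀).map φ = 0 := Polynomial.eq_zero_of_dvd_of_degree_lt hrem hdeg
      have h1 : F %ₘ f₀ = 0 := by
        apply hmapinj; simpa using h0
      exact hndvdF ((modByMonic_eq_zero_iff_dvd hmonic).mp h1)
    have hcop : IsCoprime (f₀.map φ) (F.map φ) := hirr'.coprime_iff_not_dvd.mpr hndvd'
    obtain ⟨U, V, hUV⟩ := hcop
    obtain ⟨b, hb⟩ := IsLocalization.integerNormalization_map_to_map (nonZeroDivisors A) U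
    obtain ⟨c, hc⟩ := IsLocalization.integerNormalization_map_to_map (nonZeroDivisors A) V
    set u := IsLocalization.integerNormalization (nonZeroDivisors A) U with hudef
    set v := IsLocalization.integerNormalization (nonZeroDivisors A) V with hvdef
    have hb' : u.map φ = Polynomial.C (φ (b : A)) * U := by
      rw [hb, ← algebraMap_smul K (b : A) U, Polynomial.smul_eq_C_mul]
    have hc' : v.map φ = Polynomial.C (φ (c : A)) * V := by
      rw [hc, ← algebraMap_smul K (c : A) V, Polynomial.smul_eq_C_mul]
    have hkey : Polynomial.C (c : A) * u * f₀ + Polynomial.C (b : A) * v * F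
        = Polynomial.C ((b : A) * (c : A)) := by
      apply hmapinj
      simp only [Polynomial.map_add, Polynomial.map_mul, Polynomial.map_C, map_mul,
        Polynomial.C_mul, hb', hc']
      linear_combination (Polynomial.C (φ (b : A)) * Polynomial.C (φ (c : A))) * hUV
    refine ⟨(b : A) * (c : A), ?_, ?_⟩
    · exact mul_ne_zero (nonZeroDivisors.ne_zero b.2) (nonZeroDivisors.ne_zero c.2)
    · rw [← hkey, map_add]
      have h1 : π (Polynomial.C (c : A) * u * f₀) = 0 := by
        rw [hπdef, Ideal.Quotient.eq_zero_iff_mem]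
        exact Ideal.mul_mem_left _ _ (Ideal.subset_span rfl)
      rw [h1, zero_add, map_mul, Ideal.mem_span_singleton]
      exact dvd_mul_left _ _
  -- key lemma: primes strictly below P are ⊥
  have hkeylem : ∀ Q : Ideal (Polynomial A ⧸ I), Q.IsPrime → Q < P → Q = ⊥ := by
    intro Q hQ hQP
    by_contra hQne
    obtain ⟨f, hfQ, hf0⟩ := Submodule.exists_mem_ne_zero_of_ne_bot hQne
    obtain ⟨F, hFf⟩ := hsurj f
    obtain ⟨a, ha0, haQ⟩ := hnorm F (by rw [hFf]; exact hf0)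
    have haQ' : π (Polynomial.C a) ∈ Q := by
      refine Ideal.span_le.mpr ?_ haQ
      rw [hFf]
      simpa using hfQ
    set ρ : A →+* (Polynomial A ⧸ I) := π.comp Polynomial.C with hρdef
    set Q₀ : Ideal A := Ideal.comap ρ Q with hQ₀def
    haveI := hQ
    have hQ₀prime : Q₀.IsPrime := Ideal.IsPrime.comap ρ
    have haQ₀ : a ∈ Q₀ := haQ'
    have hQ₀le : ∀ x : A, x ∈ Q₀ → h ∣ x := by
      intro x hx
      exact (hmemP x).mp (hQP.le hx)
    obtain ⟨i, e, hbe, hae⟩ := WfDvdMonoid.max_power_factor ha0 hirr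
    have heQ₀ : e ∉ Q₀ := fun hmem => hbe (hQ₀le e hmem)
    have hhiQ₀ : h ^ i ∈ Q₀ := by
      rcases hQ₀prime.mem_or_mem (hae ▸ haQ₀) with hmem | hmem
      · exact hmem
      · exact absurd hmem heQ₀
    have hi0 : i ≠ 0 := by
      intro hi
      subst hi
      rw [pow_zero, one_mul] at hae
      exact hbe (hae ▸ hQ₀le a haQ₀)
    have hhQ₀ : h ∈ Q₀ := hQ₀prime.mem_of_pow_mem i hhiQ₀
    have hChQ : π (Polynomial.C h) ∈ Q := hhQ₀
    have hXQ : π Polynomial.X ∈ Q := by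
      apply hQ.mem_of_pow_mem n
      have hXn : π Polynomial.X ^ n = π (Polynomial.C g) := by
        rw [← map_pow, hπdef, Ideal.Quotient.mk_eq_mk_iff_sub_mem]
        exact Ideal.subset_span rfl
      rw [hXn, hg, map_mul, map_mul]
      exact Ideal.mul_mem_right _ _ hChQ
    have hPQ : P ≤ Q := by
      rw [hPdef, Ideal.span_le]
      rintro x (rfl | rfl)
      · exact hXQ
      · exact hChQ
    exact absurd hPQ (not_le_of_gt hQP)
  -- assemble
  refine ⟨hPprime, ?_⟩
  set p : PrimeSpectrum (Polynomial A ⧸ I) := ⟨P, hPprime⟩ with hpdef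
  haveI : Ideal.IsPrime (⊥ : Ideal (Polynomial A ⧸ I)) := Ideal.bot_prime
  have hbotpt : (⟨⊥, Ideal.bot_prime⟩ : PrimeSpectrum (Polynomial A ⧸ I)) < p := by
    rw [← PrimeSpectrum.asIdeal_lt_asIdeal]
    exact bot_lt_iff_ne_bot.mpr hPne
  have hbelow : ∀ b : PrimeSpectrum (Polynomial A ⧸ I), b < p → Order.height b = 0 := by
    intro b hb
    have hb' : b.asIdeal = ⊥ := hkeylem b.asIdeal b.isPrime
      ((PrimeSpectrum.asIdeal_lt_asIdeal b p).mpr hb)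
    rw [Order.height_eq_zero]
    intro c hc
    have h1 : c.asIdeal ≤ b.asIdeal := hc
    have h2 : c.asIdeal = ⊥ := le_bot_iff.mp (hb' ▸ h1)
    have h3 : c = b := PrimeSpectrum.ext (h2.trans hb'.symm)
    exact h3 ▸ le_refl c
  rw [Order.height_eq_iSup_lt_height]
  apply le_antisymm
  · apply iSup₂_le
    intro b hb
    rw [hbelow b hb, zero_add]
  · refine le_iSup₂_of_le _ hbotpt ?_
    rw [hbelow _ hbotpt, zero_add]

/-- Let `k` be a field and let `g ∈ k[x_1,…,x_d]` factor as `g = h·q` where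
`h` is irreducible and `h ∤ q`.  Suppose the hypersurface ring
`R = k[z,x_1,…,x_d]/(zⁿ − g)` (with `n ≥ 1`) is a normal domain (a domain that is integrally
closed in its fraction field).  Then the ideal of `R` generated by the images of `z` and `h`
is a prime ideal of height one.  Here we realize `k[z,x_1,…,x_d]` as the polynomial ring in
`z` over `k[x_1,…,x_d]`, so that `z = Polynomial.X` and `h` is included via `Polynomial.C`. -/
theorem divisor_class_stmt_1 {k : Type*} [Field k] {d n : ℕ} (hn : 1 ≤ n)
    (g h q : MvPolynomial (Fin d) k) (hirr : Irreducible h) (hnd : ¬ h ∣ q) (hg : g = h * q)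
    [IsDomain (Polynomial (MvPolynomial (Fin d) k) ⧸
      Ideal.span {Polynomial.X ^ n - Polynomial.C g})]
    [IsIntegrallyClosed (Polynomial (MvPolynomial (Fin d) k) ⧸
      Ideal.span {Polynomial.X ^ n - Polynomial.C g})] :
    ∃ hp : (Ideal.span
        {Ideal.Quotient.mk (Ideal.span {Polynomial.X ^ n - Polynomial.C g}) Polynomial.X,
         Ideal.Quotient.mk (Ideal.span {Polynomial.X ^ n - Polynomial.C g}) (Polynomial.C h)} :
        Ideal (Polynomial (MvPolynomial (Fin d) k) ⧸
          Ideal.span {Polynomial.X ^ n - Polynomial.C g})).IsPrime,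
      Order.height (⟨_, hp⟩ : PrimeSpectrum (Polynomial (MvPolynomial (Fin d) k) ⧸
        Ideal.span {Polynomial.X ^ n - Polynomial.C g})) = 1 :=
  divisor_class_aux hn g h q hirr hg
end

section
/- Let k be a field, n ≥ 1, and let g ∈ k[x_1,…,x_d] with g = h_1 ⋯ h_r a factorization into irreducible polynomials that are pairwise non-associated. Suppose R = k[z,x_1,…,x_d]/(z^n − g) is a normal domain. Then the intersection of the ideals 𝔭_i = (z, h_i)R, for i = 1,…,r, equals the principal ideal zR; that is, ⋂_{i=1}^r (z, h_i)R = zR. -/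
private lemma prod_dvd_of_prime_pairwise {α ι : Type*} [CommMonoidWithZero α] [IsCancelMulZero α]
    (h : ι → α) :
    ∀ s : Finset ι, ∀ a : α, (∀ i ∈ s, Prime (h i)) →
      (∀ i ∈ s, ∀ j ∈ s, i ≠ j → ¬ Associated (h i) (h j)) →
      (∀ i ∈ s, h i ∣ a) → (∏ i ∈ s, h i) ∣ a := by
  intro s
  induction s using Finset.cons_induction with
  | empty => simp
  | cons x s hx ih =>
    intro a hp hpa hdvd
    obtain ⟨b, hb⟩ := hdvd x (Finset.mem_cons_self x s)
    have hbd : ∀ j ∈ s, h j ∣ b := by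
      intro j hj
      have hjx : j ≠ x := fun e => hx (e ▸ hj)
      have hjp : Prime (h j) := hp j (Finset.mem_cons_of_mem hj)
      rcases hjp.2.2 (h x) b (hb ▸ hdvd j (Finset.mem_cons_of_mem hj)) with hd | hd
      · exact absurd (hjp.irreducible.associated_of_dvd
          (hp x (Finset.mem_cons_self x s)).irreducible hd)
          (hpa j (Finset.mem_cons_of_mem hj) x (Finset.mem_cons_self x s) hjx)
      · exact hd
    rw [Finset.prod_cons, hb]
    exact mul_dvd_mul_left (h x)
      (ih b (fun i hi => hp i (Finset.mem_cons_of_mem hi))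
        (fun i hi j hj => hpa i (Finset.mem_cons_of_mem hi) j (Finset.mem_cons_of_mem hj))
        hbd)

set_option synthInstance.maxHeartbeats 1000000 in
/-- Let `k` be a field, `n ≥ 1`, and let `g ∈ k[x_1,…,x_d]` with
`g = h_1 ⋯ h_r` a factorization into irreducible polynomials that are pairwise non-associated.
Suppose `R = k[z,x_1,…,x_d]/(zⁿ − g)` is a normal domain.  Then
`⋂_{i=1}^r (z, h_i)R = zR`.  Here `k[z,x_1,…,x_d]` is realized as the polynomial ring in `z`
over `k[x_1,…,x_d]`, so `z = Polynomial.X` and the `h_i` are included via `Polynomial.C`. -/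
theorem divisor_class_stmt_2 {k : Type*} [Field k] {d n r : ℕ} (hn : 1 ≤ n) (hr : 1 ≤ r)
    (g : MvPolynomial (Fin d) k) (h : Fin r → MvPolynomial (Fin d) k)
    (hirr : ∀ i, Irreducible (h i))
    (hassoc : ∀ i j, i ≠ j → ¬ Associated (h i) (h j))
    (hg : g = ∏ i, h i)
    [IsDomain (Polynomial (MvPolynomial (Fin d) k) ⧸
      Ideal.span {Polynomial.X ^ n - Polynomial.C g})]
    [IsIntegrallyClosed (Polynomial (MvPolynomial (Fin d) k) ⧸
      Ideal.span {Polynomial.X ^ n - Polynomial.C g})] :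
    (⨅ i : Fin r, Ideal.span
        {Ideal.Quotient.mk (Ideal.span {Polynomial.X ^ n - Polynomial.C g}) Polynomial.X,
         Ideal.Quotient.mk (Ideal.span {Polynomial.X ^ n - Polynomial.C g})
           (Polynomial.C (h i))}) =
      Ideal.span
        {Ideal.Quotient.mk (Ideal.span {Polynomial.X ^ n - Polynomial.C g}) Polynomial.X} := by
  classical
  apply le_antisymm
  · -- hard direction
    intro f hf
    obtain ⟨p, rfl⟩ := Ideal.Quotient.mk_surjective f
    -- for each i, h i divides the constant coefficient of p
    have key : ∀ i : Fin r, h i ∣ p.coeff 0 := by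
      intro i
      have hfi := Ideal.mem_iInf.mp hf i
      have hmap : Ideal.span
            {Ideal.Quotient.mk (Ideal.span {Polynomial.X ^ n - Polynomial.C g}) Polynomial.X,
             Ideal.Quotient.mk (Ideal.span {Polynomial.X ^ n - Polynomial.C g})
               (Polynomial.C (h i))} =
          Ideal.map (Ideal.Quotient.mk (Ideal.span {Polynomial.X ^ n - Polynomial.C g}))
            (Ideal.span {Polynomial.X, Polynomial.C (h i)}) := by
        rw [Ideal.map_span, Set.image_insert_eq, Set.image_singleton]
      rw [hmap, Ideal.mem_quotient_iff_mem_sup] at hfi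
      have hIle : Ideal.span {Polynomial.X ^ n - Polynomial.C g} ≤
          Ideal.span {Polynomial.X, Polynomial.C (h i)} := by
        rw [Ideal.span_le, Set.singleton_subset_iff]
        refine sub_mem ?_ ?_
        · exact Ideal.pow_mem_of_mem _ (Ideal.subset_span (Set.mem_insert _ _)) n hn
        · have hdvd : h i ∣ g := by
            rw [hg]; exact Finset.dvd_prod_of_mem h (Finset.mem_univ i)
          obtain ⟨c, hc⟩ := hdvd
          rw [hc, map_mul]
          exact Ideal.mul_mem_right _ _
            (Ideal.subset_span (Set.mem_insert_of_mem _ rfl))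
      rw [sup_eq_left.mpr hIle] at hfi
      obtain ⟨a, b, hab⟩ := Ideal.mem_span_pair.mp hfi
      refine Dvd.intro_left (b.coeff 0) ?_
      rw [← hab]
      simp [Polynomial.mul_coeff_zero]
    have hgdvd : g ∣ p.coeff 0 := by
      rw [hg]
      exact prod_dvd_of_prime_pairwise h Finset.univ (p.coeff 0)
        (fun i _ => (hirr i).prime)
        (fun i _ j _ hij => hassoc i j hij)
        (fun i _ => key i)
    obtain ⟨c, hc⟩ := hgdvd
    have hX : Polynomial.X ∣ (p - Polynomial.C (p.coeff 0)) := by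
      rw [Polynomial.X_dvd_iff]; simp
    obtain ⟨t, ht⟩ := hX
    have hp : p = Polynomial.X * t + Polynomial.C g * Polynomial.C c := by
      rw [← Polynomial.C_mul, ← hc, ← ht]; ring
    refine (Ideal.mem_span_singleton (α := Polynomial (MvPolynomial (Fin d) k) ⧸
      Ideal.span {Polynomial.X ^ n - Polynomial.C g})).mpr ?_
    have heq : Ideal.Quotient.mk (Ideal.span {Polynomial.X ^ n - Polynomial.C g}) p =
        Ideal.Quotient.mk (Ideal.span {Polynomial.X ^ n - Polynomial.C g})
          (Polynomial.X * t + Polynomial.X ^ n * Polynomial.C c) := by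
      rw [Ideal.Quotient.eq, hp]
      have hring : Polynomial.X * t + Polynomial.C g * Polynomial.C c -
          (Polynomial.X * t + Polynomial.X ^ n * Polynomial.C c) =
          -(Polynomial.X ^ n - Polynomial.C g) * Polynomial.C c := by ring
      rw [hring]
      exact Ideal.mul_mem_right _ _ (neg_mem (Ideal.subset_span rfl))
    rw [heq]
    exact map_dvd _ (dvd_add (dvd_mul_right _ _)
      (dvd_mul_of_dvd_left (dvd_pow_self _ (Nat.one_le_iff_ne_zero.mp hn)) _))
  · -- easy direction
    rw [Ideal.span_le, Set.singleton_subset_iff, SetLike.mem_coe, Ideal.mem_iInf]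
    intro i
    exact Ideal.subset_span (Set.mem_insert _ _)
end

section
/- Let k be a field and let g ∈ k[x_1,…,x_d] factor as g = h·q where h is irreducible and h does not divide q. Suppose R = k[z,x_1,…,x_d]/(z^n − g) (n ≥ 1) is a normal domain, and let 𝔭 = (z, h)R, a prime ideal of R. Then in the localization R_𝔭 of R at 𝔭, the ideal generated by the image of h equals the ideal generated by the image of z^n; that is, h·R_𝔭 = z^n·R_𝔭. -/
set_option maxHeartbeats 1000000
set_option synthInstance.maxHeartbeats 400000



open Polynomial in
lemma aux_q_not_mem {k : Type*} [Field k] {d n : ℕ} (hn : 1 ≤ n)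
    (g h q : MvPolynomial (Fin d) k) (hnd : ¬ h ∣ q) (hg : g = h * q) :
    Ideal.Quotient.mk (Ideal.span {X ^ n - C g}) (C q) ∉
      Ideal.span {Ideal.Quotient.mk (Ideal.span {X ^ n - C g}) X,
        Ideal.Quotient.mk (Ideal.span {X ^ n - C g}) (C h)} := by
  intro hmem
  set I : Ideal (Polynomial (MvPolynomial (Fin d) k)) := Ideal.span {X ^ n - C g} with hI
  have hJ : (Ideal.span {Ideal.Quotient.mk I X, Ideal.Quotient.mk I (C h)})
      = Ideal.map (Ideal.Quotient.mk I) (Ideal.span {X, C h}) := by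
    rw [Ideal.map_span, Set.image_insert_eq, Set.image_singleton]
  rw [hJ] at hmem
  obtain ⟨y, hy, hyq⟩ := (Ideal.mem_map_iff_of_surjective _
    Ideal.Quotient.mk_surjective).mp hmem
  have hsub : C q - y ∈ I := by
    rw [Ideal.Quotient.eq] at hyq
    simpa using I.neg_mem hyq
  have hIle : I ≤ Ideal.span {X, C h} := by
    rw [hI, Ideal.span_le]
    intro x hx
    simp only [Set.mem_singleton_iff] at hx
    subst hx
    have hXmem : (X : Polynomial (MvPolynomial (Fin d) k)) ∈ Ideal.span {X, C h} :=
      Ideal.subset_span (by simp)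
    have hX : (X : Polynomial (MvPolynomial (Fin d) k)) ^ n ∈ Ideal.span {X, C h} := by
      have : (X : Polynomial (MvPolynomial (Fin d) k)) ^ n = X ^ (n - 1) * X := by
        rw [← pow_succ, Nat.sub_add_cancel hn]
      rw [this]
      exact Ideal.mul_mem_left _ _ hXmem
    have hC : (C g : Polynomial (MvPolynomial (Fin d) k)) ∈ Ideal.span {X, C h} := by
      have hh : (C h : Polynomial (MvPolynomial (Fin d) k)) ∈ Ideal.span {X, C h} :=
        Ideal.subset_span (by simp)
      rw [hg, map_mul, mul_comm]
      exact Ideal.mul_mem_left _ _ hh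
    exact Ideal.sub_mem _ hX hC
  have h1 : C q ∈ Ideal.span {X, C h} := by
    have := Ideal.add_mem _ (hIle hsub) hy
    simpa using this
  have h2 : q ∈ Ideal.span {h} := by
    have := Ideal.mem_map_of_mem (Polynomial.evalRingHom (0 : MvPolynomial (Fin d) k)) h1
    rw [Ideal.map_span, Set.image_insert_eq, Set.image_singleton] at this
    simp only [coe_evalRingHom, eval_X, eval_C] at this
    have hle : Ideal.span {(0 : MvPolynomial (Fin d) k), h} ≤ Ideal.span {h} := by
      rw [Ideal.span_le]
      intro x hx
      simp only [Set.mem_insert_iff, Set.mem_singleton_iff] at hx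
      rcases hx with rfl | rfl
      · exact Ideal.zero_mem _
      · exact Ideal.subset_span rfl
    exact hle this
  exact hnd (Ideal.mem_span_singleton.mp h2)

lemma aux_loc_span {R : Type*} [CommRing R] (𝔭 : Ideal R) [𝔭.IsPrime] (a b c : R)
    (hb : b ∉ 𝔭) (habc : c = a * b) :
    Ideal.span {algebraMap R (Localization.AtPrime 𝔭) a} =
      Ideal.span {algebraMap R (Localization.AtPrime 𝔭) c} := by
  have hu : IsUnit (algebraMap R (Localization.AtPrime 𝔭) b) :=
    IsLocalization.map_units (Localization.AtPrime 𝔭) (⟨b, hb⟩ : 𝔭.primeCompl)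
  apply le_antisymm
  · apply Ideal.span_singleton_le_span_singleton.mpr
    refine ⟨(↑hu.unit⁻¹ : Localization.AtPrime 𝔭), ?_⟩
    rw [habc, map_mul]
    rw [mul_assoc]
    rw [hu.mul_val_inv, mul_one]
  · apply Ideal.span_singleton_le_span_singleton.mpr
    exact ⟨_, by rw [habc, map_mul]⟩

/-- Let `k` be a field and let `g ∈ k[x_1,…,x_d]` factor as `g = h·q` with
`h` irreducible and `h ∤ q`.  Suppose `R = k[z,x_1,…,x_d]/(zⁿ − g)` (`n ≥ 1`) is a normal
domain, and let `𝔭 = (z,h)R`, a prime ideal of `R`.  Then in the localization `R_𝔭` the ideal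
generated by the image of `h` equals the ideal generated by the image of `zⁿ`:
`h·R_𝔭 = zⁿ·R_𝔭`.  Here `k[z,x_1,…,x_d]` is realized as the polynomial ring in `z` over
`k[x_1,…,x_d]`, so `z = Polynomial.X` and `h` is included via `Polynomial.C`. -/
theorem divisor_class_stmt_3 {k : Type*} [Field k] {d n : ℕ} (hn : 1 ≤ n)
    (g h q : MvPolynomial (Fin d) k) (hirr : Irreducible h) (hnd : ¬ h ∣ q) (hg : g = h * q)
    [IsDomain (Polynomial (MvPolynomial (Fin d) k) ⧸
      Ideal.span {Polynomial.X ^ n - Polynomial.C g})]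
    [IsIntegrallyClosed (Polynomial (MvPolynomial (Fin d) k) ⧸
      Ideal.span {Polynomial.X ^ n - Polynomial.C g})]
    [hp : (Ideal.span
        {Ideal.Quotient.mk (Ideal.span {Polynomial.X ^ n - Polynomial.C g}) Polynomial.X,
         Ideal.Quotient.mk (Ideal.span {Polynomial.X ^ n - Polynomial.C g}) (Polynomial.C h)} :
        Ideal (Polynomial (MvPolynomial (Fin d) k) ⧸
          Ideal.span {Polynomial.X ^ n - Polynomial.C g})).IsPrime] :
    Ideal.span
        {@algebraMap
          (Polynomial (MvPolynomial (Fin d) k) ⧸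
            Ideal.span {Polynomial.X ^ n - Polynomial.C g})
          (Localization.AtPrime (Ideal.span
            {Ideal.Quotient.mk (Ideal.span {Polynomial.X ^ n - Polynomial.C g}) Polynomial.X,
             Ideal.Quotient.mk (Ideal.span {Polynomial.X ^ n - Polynomial.C g})
               (Polynomial.C h)})) inferInstance inferInstance _
          (Ideal.Quotient.mk (Ideal.span {Polynomial.X ^ n - Polynomial.C g})
            (Polynomial.C h))} =
      Ideal.span
        {@algebraMap
          (Polynomial (MvPolynomial (Fin d) k) ⧸
            Ideal.span {Polynomial.X ^ n - Polynomial.C g})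
          (Localization.AtPrime (Ideal.span
            {Ideal.Quotient.mk (Ideal.span {Polynomial.X ^ n - Polynomial.C g}) Polynomial.X,
             Ideal.Quotient.mk (Ideal.span {Polynomial.X ^ n - Polynomial.C g})
               (Polynomial.C h)})) inferInstance inferInstance _
          (Ideal.Quotient.mk (Ideal.span {Polynomial.X ^ n - Polynomial.C g})
            (Polynomial.X ^ n))} := by
  refine aux_loc_span _ _ (Ideal.Quotient.mk _ (Polynomial.C q)) _
    (aux_q_not_mem hn g h q hnd hg) ?_
  rw [← map_mul, Ideal.Quotient.eq]
  have : (Polynomial.X : Polynomial (MvPolynomial (Fin d) k)) ^ n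
      - Polynomial.C h * Polynomial.C q = Polynomial.X ^ n - Polynomial.C g := by
    rw [hg, map_mul]
  rw [this]
  exact Ideal.subset_span rfl
end

section
/- Let k be a field and let g ∈ k[x_1,…,x_d] be weighted homogeneous of degree m with respect to positive integer weights c_1,…,c_d on the variables, with m relatively prime to n and n ≥ 2. Suppose R = k[z,x_1,…,x_d]/(z^n − g) is a normal domain and g = h_1 ⋯ h_r is a factorization into irreducible polynomials with r ≥ 2. Then the ideal (z, h_1)R of R is not a principal ideal. -/
open Polynomial

noncomputable section

namespace DCS4

variable {k : Type*} [Field k] {d : ℕ}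

/-- weighted degree of an exponent vector -/
def wdeg {d : ℕ} (w : Fin d → ℕ) (s : Fin d →₀ ℕ) : ℕ := s.sum fun i e => e * w i

/-- substitution `xᵢ ↦ xᵢ · T ^ w i` -/
def psi (w : Fin d → ℕ) : MvPolynomial (Fin d) k →+* Polynomial (MvPolynomial (Fin d) k) :=
  MvPolynomial.eval₂Hom (Polynomial.C.comp MvPolynomial.C)
    fun i => Polynomial.C (MvPolynomial.X i) * Polynomial.X ^ w i

lemma psi_monomial (w : Fin d → ℕ) (s : Fin d →₀ ℕ) (a : k) :
    psi w (MvPolynomial.monomial s a) =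
      Polynomial.C (MvPolynomial.monomial s a) * Polynomial.X ^ wdeg w s := by
  rw [psi, MvPolynomial.eval₂Hom_monomial]
  have h1 : (s.prod fun i e => (Polynomial.C (MvPolynomial.X i : MvPolynomial (Fin d) k) * Polynomial.X ^ w i) ^ e)
      = Polynomial.C (s.prod fun i e => (MvPolynomial.X i : MvPolynomial (Fin d) k) ^ e) * Polynomial.X ^ wdeg w s := by
    rw [Finsupp.prod, Finsupp.prod, wdeg, Finsupp.sum]
    have step : ∀ i ∈ s.support,
        (Polynomial.C (MvPolynomial.X i : MvPolynomial (Fin d) k) * Polynomial.X ^ w i) ^ s i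
          = Polynomial.C ((MvPolynomial.X i : MvPolynomial (Fin d) k) ^ s i) * Polynomial.X ^ (s i * w i) := by
      intro i _
      rw [mul_pow, ← Polynomial.C_pow, ← pow_mul, mul_comm (w i)]
    rw [Finset.prod_congr rfl step, Finset.prod_mul_distrib, ← map_prod,
      Finset.prod_pow_eq_pow_sum]
  rw [h1, RingHom.comp_apply, ← mul_assoc, ← Polynomial.C_mul, ← MvPolynomial.monomial_eq]

lemma psi_coeff (w : Fin d → ℕ) (p : MvPolynomial (Fin d) k) (u : ℕ) :
    (psi w p).coeff u =
      ∑ s ∈ p.support.filter (fun s => wdeg w s = u),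
        MvPolynomial.monomial s (MvPolynomial.coeff s p) := by
  classical
  conv_lhs => rw [p.as_sum, map_sum, finset_sum_coeff]
  rw [Finset.sum_filter]
  refine Finset.sum_congr rfl fun s _ => ?_
  rw [psi_monomial, coeff_C_mul, coeff_X_pow]
  by_cases hs : wdeg w s = u
  · simp [hs]
  · simp [hs, Ne.symm hs]

lemma psi_coeff_ne_zero (w : Fin d → ℕ) {p : MvPolynomial (Fin d) k} {u : ℕ}
    (h : (psi w p).coeff u ≠ 0) : ∃ s, wdeg w s = u := by
  classical
  rw [psi_coeff] at h
  obtain ⟨s, hs, -⟩ := Finset.exists_ne_zero_of_sum_ne_zero h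
  exact ⟨s, (Finset.mem_filter.mp hs).2⟩

lemma psi_psi_coeff (w : Fin d → ℕ) (p : MvPolynomial (Fin d) k) (u : ℕ) :
    psi w ((psi w p).coeff u) = Polynomial.C ((psi w p).coeff u) * Polynomial.X ^ u := by
  classical
  rw [psi_coeff, map_sum, map_sum, Finset.sum_mul]
  refine Finset.sum_congr rfl fun s hs => ?_
  rw [psi_monomial, (Finset.mem_filter.mp hs).2]

lemma psi_eval_one (w : Fin d → ℕ) (p : MvPolynomial (Fin d) k) :
    (psi w p).eval 1 = p := by
  have : (Polynomial.evalRingHom (1 : MvPolynomial (Fin d) k)).comp (psi w)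
      = RingHom.id _ := by
    apply MvPolynomial.ringHom_ext <;> intro a <;>
      simp [psi]
  exact RingHom.congr_fun this p

lemma psi_wh (w : Fin d → ℕ) {p : MvPolynomial (Fin d) k} {u : ℕ}
    (h : ∀ s, MvPolynomial.coeff s p ≠ 0 → wdeg w s = u) :
    psi w p = Polynomial.C p * Polynomial.X ^ u := by
  classical
  conv_lhs => rw [p.as_sum, map_sum]
  conv_rhs => rw [p.as_sum, map_sum, Finset.sum_mul]
  refine Finset.sum_congr rfl fun s hs => ?_
  rw [psi_monomial, h s (MvPolynomial.mem_support_iff.mp hs)]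


def phi (w : Fin d → ℕ) (m : ℕ) :
    Polynomial (MvPolynomial (Fin d) k) →+* Polynomial (Polynomial (MvPolynomial (Fin d) k)) :=
  Polynomial.eval₂RingHom (S := Polynomial (Polynomial (MvPolynomial (Fin d) k))) ((Polynomial.mapRingHom Polynomial.C).comp (psi w))
    (Polynomial.C Polynomial.X * Polynomial.X ^ m)

lemma phi_C (w : Fin d → ℕ) (m : ℕ) (a : MvPolynomial (Fin d) k) :
    phi w m (Polynomial.C a) = (psi w a).map Polynomial.C := by
  simp [phi]

lemma phi_X (w : Fin d → ℕ) (m : ℕ) :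
    phi (k := k) w m Polynomial.X = Polynomial.C Polynomial.X * Polynomial.X ^ m := by
  simp [phi]

lemma coeff_mul_C_mul_pow {R : Type*} [CommSemiring R] (Q : Polynomial R) (s : R) (t e : ℕ) :
    (Q * (Polynomial.C s * Polynomial.X ^ t)).coeff e =
      if t ≤ e then Q.coeff (e - t) * s else 0 := by
  have h : Q * (Polynomial.C s * Polynomial.X ^ t) = Q * Polynomial.C s * Polynomial.X ^ t := by
    ring
  rw [h, Polynomial.coeff_mul_X_pow']
  split
  · rw [Polynomial.coeff_mul_C]
  · rfl

lemma phi_coeff (w : Fin d → ℕ) (m : ℕ) (f : Polynomial (MvPolynomial (Fin d) k)) (e : ℕ) :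
    (phi w m f).coeff e =
      ∑ j ∈ f.support,
        if m * j ≤ e then
          Polynomial.C ((psi w (f.coeff j)).coeff (e - m * j)) * Polynomial.X ^ j
        else 0 := by
  classical
  conv_lhs => rw [phi]
  rw [Polynomial.coe_eval₂RingHom, Polynomial.eval₂_eq_sum, Polynomial.sum_def,
    Polynomial.finset_sum_coeff]
  refine Finset.sum_congr rfl fun j hj => ?_
  rw [RingHom.comp_apply, Polynomial.coe_mapRingHom]
  have h2 : (Polynomial.C (Polynomial.X : Polynomial (MvPolynomial (Fin d) k)) *
      Polynomial.X ^ m) ^ j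
      = Polynomial.C ((Polynomial.X : Polynomial (MvPolynomial (Fin d) k)) ^ j) *
        Polynomial.X ^ (m * j) := by
    rw [mul_pow (M := Polynomial (Polynomial (MvPolynomial (Fin d) k))), ← Polynomial.C_pow, ← pow_mul]
  rw [h2, coeff_mul_C_mul_pow, Polynomial.coeff_map]

lemma phi_phi_coeff (w : Fin d → ℕ) (m : ℕ) (f : Polynomial (MvPolynomial (Fin d) k)) (e : ℕ) :
    phi w m ((phi w m f).coeff e)
      = Polynomial.C ((phi w m f).coeff e) * Polynomial.X ^ e := by
  classical
  rw [phi_coeff, map_sum, map_sum, Finset.sum_mul]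
  refine Finset.sum_congr rfl fun j hj => ?_
  by_cases hje : m * j ≤ e
  · rw [if_pos hje]
    calc phi w m (Polynomial.C ((psi w (f.coeff j)).coeff (e - m * j)) * Polynomial.X ^ j)
        = (Polynomial.C (Polynomial.C ((psi w (f.coeff j)).coeff (e - m * j))) *
            Polynomial.X ^ (e - m * j)) *
          (Polynomial.C ((Polynomial.X : Polynomial (MvPolynomial (Fin d) k)) ^ j) *
            Polynomial.X ^ (m * j)) := by
          rw [map_mul, phi_C, psi_psi_coeff, Polynomial.map_mul, Polynomial.map_C,
            Polynomial.map_pow, Polynomial.map_X, map_pow, phi_X, mul_pow (M := Polynomial (Polynomial (MvPolynomial (Fin d) k))), ← Polynomial.C_pow,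
            ← pow_mul]
      _ = Polynomial.C (Polynomial.C ((psi w (f.coeff j)).coeff (e - m * j)) *
            Polynomial.X ^ j) * Polynomial.X ^ (e - m * j + m * j) := by
          rw [Polynomial.C_mul, pow_add]; ring
      _ = Polynomial.C (Polynomial.C ((psi w (f.coeff j)).coeff (e - m * j)) *
            Polynomial.X ^ j) * Polynomial.X ^ e := by
          rw [Nat.sub_add_cancel hje]
  · rw [if_neg hje, map_zero]
    simp

lemma phi_eval_one (w : Fin d → ℕ) (m : ℕ) (f : Polynomial (MvPolynomial (Fin d) k)) :
    ((phi w m f).eval 1) = f := by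
  have h : (Polynomial.evalRingHom (1 : Polynomial (MvPolynomial (Fin d) k))).comp (phi w m)
      = RingHom.id _ := by
    apply Polynomial.ringHom_ext
    · intro a
      rw [RingHom.comp_apply, RingHom.id_apply, phi_C, Polynomial.coe_evalRingHom,
        Polynomial.eval_one_map, psi_eval_one]
    · simp [phi_X]
  exact RingHom.congr_fun h f

lemma phi_q (w : Fin d → ℕ) (m n : ℕ) (g : MvPolynomial (Fin d) k)
    (hgw : psi w g = Polynomial.C g * Polynomial.X ^ (n * m)) :
    phi w m (Polynomial.X ^ n - Polynomial.C g)
      = Polynomial.C (Polynomial.X ^ n - Polynomial.C g) * Polynomial.X ^ (n * m) := by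
  have h0 : phi w m (Polynomial.X ^ n - Polynomial.C g)
      = phi w m (Polynomial.X ^ n) - phi w m (Polynomial.C g) := map_sub (phi w m) _ _
  have h1 : phi w m (Polynomial.X ^ n) = phi (k := k) w m Polynomial.X ^ n :=
    (phi w m).map_pow _ _
  rw [h0, h1, phi_X, phi_C, hgw, Polynomial.map_mul, Polynomial.map_C,
    Polynomial.map_pow, Polynomial.map_X, mul_pow (M := Polynomial (Polynomial (MvPolynomial (Fin d) k))), ← Polynomial.C_pow, ← pow_mul,
    Polynomial.C_sub, mul_comm m n]
  ring

lemma phi_coeff_natDegree_lt (w : Fin d → ℕ) (m : ℕ) {n : ℕ} (hn : 0 < n)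
    {f : Polynomial (MvPolynomial (Fin d) k)} (hf : f.natDegree < n) (e : ℕ) :
    ((phi w m f).coeff e).natDegree < n := by
  classical
  rw [phi_coeff]
  refine lt_of_le_of_lt
    (Polynomial.natDegree_sum_le_of_forall_le _ _ fun j hj => ?_) hf
  split
  · refine le_trans (Polynomial.natDegree_mul_le) ?_
    simp only [Polynomial.natDegree_C, Polynomial.natDegree_X_pow, zero_add]
    exact Polynomial.le_natDegree_of_mem_supp j hj
  · simp

lemma natTrailingDegree_prod {R : Type*} [CommRing R] [IsDomain R] {ι : Type*} {s : Finset ι}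
    {P : ι → Polynomial R} (h0 : ∀ i ∈ s, P i ≠ 0) :
    (∏ i ∈ s, P i).natTrailingDegree = ∑ i ∈ s, (P i).natTrailingDegree := by
  classical
  induction s using Finset.induction_on with
  | empty => simp
  | @insert a s ha ih =>
    rw [Finset.prod_insert ha, Finset.sum_insert ha,
      Polynomial.natTrailingDegree_mul (h0 a (Finset.mem_insert_self a s))
        (Finset.prod_ne_zero_iff.mpr fun i hi => h0 i (Finset.mem_insert_of_mem hi)),
      ih fun i hi => h0 i (Finset.mem_insert_of_mem hi)]

lemma eq_C_mul_X_pow_of_deg_eq {R : Type*} [Semiring R] {P : Polynomial R}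
    (h : P.natTrailingDegree = P.natDegree) :
    P = Polynomial.C (P.coeff P.natDegree) * Polynomial.X ^ P.natDegree := by
  ext u
  rw [Polynomial.coeff_C_mul, Polynomial.coeff_X_pow]
  rcases lt_trichotomy u P.natDegree with hu | hu | hu
  · rw [if_neg hu.ne, mul_zero, Polynomial.coeff_eq_zero_of_lt_natTrailingDegree (h ▸ hu)]
  · rw [hu, if_pos rfl, mul_one]
  · rw [if_neg hu.ne', mul_zero, Polynomial.coeff_eq_zero_of_natDegree_lt hu]

lemma factor_monomial {R : Type*} [CommRing R] [IsDomain R] {ι : Type*} {s : Finset ι}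
    {P : ι → Polynomial R} (h0 : ∀ i ∈ s, P i ≠ 0) {M : ℕ} {a : R} (ha : a ≠ 0)
    (hprod : ∏ i ∈ s, P i = Polynomial.C a * Polynomial.X ^ M) :
    ∀ i ∈ s, P i = Polynomial.C ((P i).coeff (P i).natDegree) *
      Polynomial.X ^ (P i).natDegree := by
  classical
  have hd : ∑ i ∈ s, (P i).natDegree = M := by
    rw [← Polynomial.natDegree_prod _ _ h0, hprod, Polynomial.C_mul_X_pow_eq_monomial,
      Polynomial.natDegree_monomial, if_neg ha]
  have ht : ∑ i ∈ s, (P i).natTrailingDegree = M := by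
    rw [← natTrailingDegree_prod h0, hprod, Polynomial.C_mul_X_pow_eq_monomial,
      Polynomial.natTrailingDegree_monomial ha]
  have heq : ∀ i ∈ s, (P i).natTrailingDegree = (P i).natDegree :=
    (Finset.sum_eq_sum_iff_of_le
      (fun i _ => Polynomial.natTrailingDegree_le_natDegree (P i))).mp (ht.trans hd.symm)
  exact fun i hi => eq_C_mul_X_pow_of_deg_eq (heq i hi)

lemma coeff_C_mul_pow_mul {R : Type*} [CommSemiring R] (x : R) (t : ℕ) (Q : Polynomial R)
    (e : ℕ) :
    (Polynomial.C x * Polynomial.X ^ t * Q).coeff e =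
      if t ≤ e then x * Q.coeff (e - t) else 0 := by
  have h : Polynomial.C x * Polynomial.X ^ t * Q = Q * (Polynomial.C x * Polynomial.X ^ t) := by
    ring
  rw [h, coeff_mul_C_mul_pow]
  split
  · ring
  · rfl

end DCS4
end

set_option maxHeartbeats 2000000 in
set_option synthInstance.maxHeartbeats 1000000 in
/-- Let `k` be a field and let `g ∈ k[x_1,…,x_d]` be weighted homogeneous of
degree `m` with respect to positive integer weights `c_1,…,c_d`, with `m` relatively prime to
`n` and `n ≥ 2`.  Suppose `R = k[z,x_1,…,x_d]/(zⁿ − g)` is a normal domain and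
`g = h_1 ⋯ h_r` is a factorization into irreducible polynomials with `r ≥ 2`.  Then the ideal
`(z, h_1)R` is not principal.  Here `k[z,x_1,…,x_d]` is realized as the polynomial ring in
`z` over `k[x_1,…,x_d]`, so `z = Polynomial.X` and `h_1` is included via `Polynomial.C`. -/
theorem divisor_class_stmt_4 {k : Type*} [Field k] {d n m r : ℕ} (hn : 2 ≤ n) (hr : 2 ≤ r)
    (c : Fin d → ℕ) (hc : ∀ i, 0 < c i)
    (g : MvPolynomial (Fin d) k) (hwh : g.IsWeightedHomogeneous c m)
    (hmn : Nat.Coprime m n)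
    (h : Fin r → MvPolynomial (Fin d) k) (hirr : ∀ i, Irreducible (h i))
    (hg : g = ∏ i, h i)
    [IsDomain (Polynomial (MvPolynomial (Fin d) k) ⧸
      Ideal.span {Polynomial.X ^ n - Polynomial.C g})]
    [IsIntegrallyClosed (Polynomial (MvPolynomial (Fin d) k) ⧸
      Ideal.span {Polynomial.X ^ n - Polynomial.C g})] :
    ¬ Submodule.IsPrincipal (Ideal.span
        {Ideal.Quotient.mk (Ideal.span {Polynomial.X ^ n - Polynomial.C g}) Polynomial.X,
         Ideal.Quotient.mk (Ideal.span {Polynomial.X ^ n - Polynomial.C g})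
           (Polynomial.C (h ⟨0, by omega⟩))} :
      Ideal (Polynomial (MvPolynomial (Fin d) k) ⧸
        Ideal.span {Polynomial.X ^ n - Polynomial.C g})) := by
  classical
  intro hP
  set i0 : Fin r := ⟨0, by omega⟩ with hi0def
  set q : Polynomial (MvPolynomial (Fin d) k) := Polynomial.X ^ n - Polynomial.C g with hqdef
  set I : Ideal (Polynomial (MvPolynomial (Fin d) k)) := Ideal.span {q} with hIdef
  set w : Fin d → ℕ := fun i => n * c i with hwdef
  -- basic facts about q
  have hq_monic : q.Monic := Polynomial.monic_X_pow_sub_C g (by omega)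
  have hq0 : q ≠ 0 := hq_monic.ne_zero
  have hqdeg : q.natDegree = n := Polynomial.natDegree_X_pow_sub_C
  have hq0mk : Ideal.Quotient.mk I q = 0 :=
    Ideal.Quotient.eq_zero_iff_mem.mpr (Ideal.subset_span rfl)
  -- nonvanishing
  have hh0 : ∀ i, h i ≠ 0 := fun i => (hirr i).ne_zero
  have hg0 : g ≠ 0 := by
    rw [hg]; exact Finset.prod_ne_zero_iff.mpr fun i _ => hh0 i
  have h1dvdg : h i0 ∣ g := by
    rw [hg]; exact Finset.dvd_prod_of_mem h (Finset.mem_univ i0)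
  -- the weighting facts
  have hgw : DCS4.psi w g = Polynomial.C g * Polynomial.X ^ (n * m) := by
    apply DCS4.psi_wh
    intro s hs
    have hws := hwh hs
    rw [Finsupp.weight_apply, Finsupp.sum] at hws
    rw [DCS4.wdeg, Finsupp.sum, ← hws, Finset.mul_sum]
    exact Finset.sum_congr rfl fun i _ => by simp only [smul_eq_mul, hwdef]; ring
  have hnw : ∀ s : Fin d →₀ ℕ, n ∣ DCS4.wdeg w s := by
    intro s
    rw [DCS4.wdeg, Finsupp.sum]
    exact Finset.dvd_sum fun i _ => ⟨s i * c i, by simp only [hwdef]; ring⟩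
  -- homogeneity of h i0
  have hψh0 : ∀ i : Fin r, DCS4.psi (k := k) w (h i) ≠ 0 := by
    intro i hz
    apply hh0 i
    have := DCS4.psi_eval_one w (h i)
    rw [hz, Polynomial.eval_zero] at this
    exact this.symm
  have hprodψ : ∏ i, DCS4.psi (k := k) w (h i)
      = Polynomial.C g * Polynomial.X ^ (n * m) := by
    rw [← map_prod, ← hg, hgw]
  obtain hfac := DCS4.factor_monomial (fun i _ => hψh0 i) hg0 hprodψ i0 (Finset.mem_univ i0)
  set μ : ℕ := (DCS4.psi (k := k) w (h i0)).natDegree with hμdef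
  have hμ : DCS4.psi (k := k) w (h i0) = Polynomial.C (h i0) * Polynomial.X ^ μ := by
    have hev := DCS4.psi_eval_one w (h i0)
    rw [hfac] at hev ⊢
    rw [Polynomial.eval_mul, Polynomial.eval_C, Polynomial.eval_pow, Polynomial.eval_X,
      one_pow, mul_one] at hev
    rw [hev]
  have hphiCh1 : DCS4.phi w m (Polynomial.C (h i0))
      = Polynomial.C (Polynomial.C (h i0)) * Polynomial.X ^ μ := by
    rw [DCS4.phi_C, hμ, Polynomial.map_mul, Polynomial.map_C, Polynomial.map_pow,
      Polynomial.map_X]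
  have hphiq := DCS4.phi_q w m n g hgw
  -- X is nonzero in the quotient
  have hπX0 : Ideal.Quotient.mk I (Polynomial.X : Polynomial (MvPolynomial (Fin d) k)) ≠ 0 := by
    intro h0
    rw [Ideal.Quotient.eq_zero_iff_mem, hIdef, Ideal.mem_span_singleton'] at h0
    obtain ⟨u, hu⟩ := h0
    rcases eq_or_ne u 0 with rfl | hu0
    · rw [zero_mul] at hu; exact Polynomial.X_ne_zero hu.symm
    · have := congrArg Polynomial.natDegree hu
      rw [Polynomial.natDegree_mul hu0 hq0, hqdeg, Polynomial.natDegree_X] at this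
      omega
  -- the generator
  obtain ⟨φ, hφ⟩ := hP
  have hXmem : ∃ y, y * φ = Ideal.Quotient.mk I (Polynomial.X :
      Polynomial (MvPolynomial (Fin d) k)) := by
    have hx : Ideal.Quotient.mk I (Polynomial.X : Polynomial (MvPolynomial (Fin d) k)) ∈
        Ideal.span {Ideal.Quotient.mk I (Polynomial.X : Polynomial (MvPolynomial (Fin d) k)),
          Ideal.Quotient.mk I (Polynomial.C (h i0))} :=
      Ideal.subset_span (Set.mem_insert _ _)
    rw [hφ, Ideal.submodule_span_eq, Ideal.mem_span_singleton'] at hx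
    exact hx
  have hφ0 : φ ≠ 0 := by
    rintro rfl
    obtain ⟨y, hy⟩ := hXmem
    apply hπX0
    rw [← hy]
    exact mul_zero y
  obtain ⟨f', hf'⟩ := Ideal.Quotient.mk_surjective φ
  set f : Polynomial (MvPolynomial (Fin d) k) := f' %ₘ q with hfdef
  have hπf : Ideal.Quotient.mk I f = φ := by
    rw [← hf']
    conv_rhs => rw [← Polynomial.modByMonic_add_div f' q]
    rw [map_add, map_mul, hq0mk]
    ring
  have hfdeg : f.natDegree < n := by
    rw [← hqdeg]
    exact Polynomial.natDegree_modByMonic_lt f' hq_monic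
      (fun hq1 => by rw [hq1, Polynomial.natDegree_one] at hqdeg; omega)
  have hf0 : f ≠ 0 := fun h0 => hφ0 (by rw [← hπf, h0, map_zero])
  -- the graded picture
  set G : Polynomial (Polynomial (MvPolynomial (Fin d) k) ⧸ I) :=
    (DCS4.phi w m f).map (Ideal.Quotient.mk I) with hGdef
  have hG1 : G.eval 1 = φ := by
    rw [hGdef, Polynomial.eval_one_map, DCS4.phi_eval_one, hπf]
  have hG0 : G ≠ 0 := fun h0 => hφ0 (by rw [← hG1, h0, Polynomial.eval_zero])
  set e : ℕ := G.natTrailingDegree with hedef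
  set φe := G.coeff e with hφedef
  have hφe0 : φe ≠ 0 := by
    rw [hφedef, hedef]
    exact fun hz => hG0 (Polynomial.trailingCoeff_eq_zero.mp hz)
  have hφeπ : φe = Ideal.Quotient.mk I ((DCS4.phi w m f).coeff e) := by
    rw [hφedef, hGdef, Polynomial.coeff_map]
  -- representation of f in the span
  have hφmem : φ ∈ Ideal.span {Ideal.Quotient.mk I (Polynomial.X :
      Polynomial (MvPolynomial (Fin d) k)), Ideal.Quotient.mk I (Polynomial.C (h i0))} := by
    rw [hφ, Ideal.submodule_span_eq]
    exact Ideal.mem_span_singleton_self φ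
  rw [Ideal.mem_span_pair] at hφmem
  obtain ⟨σ, τ, hστ⟩ := hφmem
  obtain ⟨s1, rfl⟩ := Ideal.Quotient.mk_surjective σ
  obtain ⟨t1, rfl⟩ := Ideal.Quotient.mk_surjective τ
  have h1eq : Ideal.Quotient.mk I (s1 * Polynomial.X + t1 * Polynomial.C (h i0) - f) = 0 := by
    rw [map_sub, map_add, map_mul, map_mul, hπf, hστ, sub_self]
  rw [Ideal.Quotient.eq_zero_iff_mem, hIdef, Ideal.mem_span_singleton'] at h1eq
  obtain ⟨u1, hu1⟩ := h1eq
  have hfeq : f = s1 * Polynomial.X + t1 * Polynomial.C (h i0) - u1 * q := by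
    linear_combination hu1

  rw [← hqdef] at hphiq
  -- φe lies in the span of (X, h1)
  have hphif : DCS4.phi w m f
      = Polynomial.C Polynomial.X * Polynomial.X ^ m * DCS4.phi w m s1
        + Polynomial.C (Polynomial.C (h i0)) * Polynomial.X ^ μ * DCS4.phi w m t1
        - Polynomial.C q * Polynomial.X ^ (n * m) * DCS4.phi w m u1 := by
    rw [hfeq, map_sub (DCS4.phi w m), (DCS4.phi w m).map_add, (DCS4.phi w m).map_mul,
      (DCS4.phi w m).map_mul, (DCS4.phi w m).map_mul, DCS4.phi_X, hphiCh1, hphiq]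
    ring
  have hcoe : (DCS4.phi w m f).coeff e =
      (if m ≤ e then Polynomial.X * (DCS4.phi w m s1).coeff (e - m) else 0)
      + (if μ ≤ e then Polynomial.C (h i0) * (DCS4.phi w m t1).coeff (e - μ) else 0)
      - (if n * m ≤ e then q * (DCS4.phi w m u1).coeff (e - n * m) else 0) := by
    rw [hphif, Polynomial.coeff_sub, Polynomial.coeff_add,
      DCS4.coeff_C_mul_pow_mul, DCS4.coeff_C_mul_pow_mul, DCS4.coeff_C_mul_pow_mul]
  have hφe_mem : φe ∈ Ideal.span
      {Ideal.Quotient.mk I (Polynomial.X : Polynomial (MvPolynomial (Fin d) k)),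
       Ideal.Quotient.mk I (Polynomial.C (h i0))} := by
    rw [hφeπ, hcoe, map_sub, map_add]
    have hz : Ideal.Quotient.mk I
        (if n * m ≤ e then q * (DCS4.phi w m u1).coeff (e - n * m) else 0) = 0 := by
      split
      · exact Ideal.Quotient.eq_zero_iff_mem.mpr
          (Ideal.mul_mem_right _ _ (Ideal.subset_span rfl))
      · exact map_zero _
    rw [hz, sub_zero]
    apply Ideal.add_mem
    · split
      · rw [map_mul]
        have hm := Ideal.mul_mem_left (Ideal.span {Ideal.Quotient.mk I (Polynomial.X : Polynomial (MvPolynomial (Fin d) k)), Ideal.Quotient.mk I (Polynomial.C (h i0))}) (Ideal.Quotient.mk I ((DCS4.phi w m s1).coeff (e - m))) (Ideal.subset_span (Set.mem_insert _ _)); exact Eq.subst (motive := fun x => x ∈ (Ideal.span {Ideal.Quotient.mk I (Polynomial.X : Polynomial (MvPolynomial (Fin d) k)), Ideal.Quotient.mk I (Polynomial.C (h i0))})) (mul_comm (Ideal.Quotient.mk I ((DCS4.phi w m s1).coeff (e - m))) (Ideal.Quotient.mk I (Polynomial.X : Polynomial (MvPolynomial (Fin d) k)))) hm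
      · rw [map_zero]
        exact Ideal.zero_mem _
    · split
      · rw [map_mul]
        have hm := Ideal.mul_mem_left (Ideal.span {Ideal.Quotient.mk I (Polynomial.X : Polynomial (MvPolynomial (Fin d) k)), Ideal.Quotient.mk I (Polynomial.C (h i0))}) (Ideal.Quotient.mk I ((DCS4.phi w m t1).coeff (e - μ))) (Ideal.subset_span (Set.mem_insert_of_mem _ rfl)); exact Eq.subst (motive := fun x => x ∈ (Ideal.span {Ideal.Quotient.mk I (Polynomial.X : Polynomial (MvPolynomial (Fin d) k)), Ideal.Quotient.mk I (Polynomial.C (h i0))})) (mul_comm (Ideal.Quotient.mk I ((DCS4.phi w m t1).coeff (e - μ))) (Ideal.Quotient.mk I (Polynomial.C (h i0)))) hm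
      · rw [map_zero]
        exact Ideal.zero_mem _
  have hφe_span : φe ∈ Submodule.span ((Polynomial (MvPolynomial (Fin d) k)) ⧸ I) {φ} := by
    rw [← hφ]
    exact hφe_mem
  rw [Ideal.submodule_span_eq, Ideal.mem_span_singleton'] at hφe_span
  obtain ⟨γ', hγ'⟩ := hφe_span
  obtain ⟨cγ, rfl⟩ := Ideal.Quotient.mk_surjective γ'
  have h2eq : Ideal.Quotient.mk I (cγ * f - (DCS4.phi w m f).coeff e) = 0 := by
    rw [map_sub, map_mul, hπf, hγ', ← hφeπ, sub_self]
  rw [Ideal.Quotient.eq_zero_iff_mem, hIdef, Ideal.mem_span_singleton'] at h2eq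
  obtain ⟨u2, hu2⟩ := h2eq
  have hcoeff_eq : (DCS4.phi w m f).coeff e = cγ * f - u2 * q := by
    linear_combination hu2
  have h3 : DCS4.phi w m ((DCS4.phi w m f).coeff e)
      = DCS4.phi w m cγ * DCS4.phi w m f
        - DCS4.phi w m u2 * (Polynomial.C q * Polynomial.X ^ (n * m)) := by
    conv_lhs => rw [hcoeff_eq]
    rw [map_sub (DCS4.phi w m), (DCS4.phi w m).map_mul, (DCS4.phi w m).map_mul, hphiq]
  have h4 : Polynomial.C φe * Polynomial.X ^ e
      = (DCS4.phi w m cγ).map (Ideal.Quotient.mk I) * G := by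
    have h5 := congrArg (Polynomial.map (Ideal.Quotient.mk I)) h3
    rw [DCS4.phi_phi_coeff] at h5
    rw [Polynomial.map_mul, Polynomial.map_C, Polynomial.map_pow, Polynomial.map_X] at h5
    rw [Polynomial.map_sub, Polynomial.map_mul, Polynomial.map_mul, Polynomial.map_mul,
      Polynomial.map_C, hq0mk, Polynomial.C_0, zero_mul, mul_zero, sub_zero] at h5
    rw [← hφeπ] at h5
    rw [← hGdef] at h5
    exact h5
  set H := (DCS4.phi w m cγ).map (Ideal.Quotient.mk I) with hHdef
  have hLne : Polynomial.C φe * Polynomial.X ^ e ≠ 0 := by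
    apply mul_ne_zero
    · exact fun hz => hφe0 (Polynomial.C_eq_zero.mp hz)
    · exact pow_ne_zero e Polynomial.X_ne_zero
  have hH0 : H ≠ 0 := by
    intro hz
    rw [hz, zero_mul] at h4
    exact hLne h4
  have hLdeg : (Polynomial.C φe * Polynomial.X ^ e).natDegree = e :=
    Polynomial.natDegree_C_mul_X_pow e φe hφe0
  have hLtr : (Polynomial.C φe * Polynomial.X ^ e).natTrailingDegree = e := by
    rw [Polynomial.C_mul_X_pow_eq_monomial, Polynomial.natTrailingDegree_monomial hφe0]
  have hdegsum : H.natDegree + G.natDegree = e := by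
    rw [← Polynomial.natDegree_mul hH0 hG0, ← h4, hLdeg]
  have htrsum : H.natTrailingDegree + G.natTrailingDegree = e := by
    rw [← Polynomial.natTrailingDegree_mul hH0 hG0, ← h4, hLtr]
  have hGnd : G.natDegree = e := by
    have g1 := Polynomial.natTrailingDegree_le_natDegree G
    have g2 := Polynomial.natTrailingDegree_le_natDegree H
    omega
  have hvan : ∀ u : ℕ, u ≠ e → (DCS4.phi w m f).coeff u = 0 := by
    intro u hu
    have hGu : G.coeff u = 0 := by
      rcases lt_or_gt_of_ne hu with hlt | hgt
      · exact Polynomial.coeff_eq_zero_of_lt_natTrailingDegree (by omega)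
      · exact Polynomial.coeff_eq_zero_of_natDegree_lt (by omega)
    have hmem : Ideal.Quotient.mk I ((DCS4.phi w m f).coeff u) = 0 := by
      rw [hGdef, Polynomial.coeff_map] at hGu
      exact hGu
    rw [Ideal.Quotient.eq_zero_iff_mem, hIdef, Ideal.mem_span_singleton'] at hmem
    obtain ⟨b, hb⟩ := hmem
    rcases eq_or_ne b 0 with rfl | hb0
    · rw [← hb, zero_mul]
    · exfalso
      have hdlt := DCS4.phi_coeff_natDegree_lt w m (show 0 < n by omega) hfdeg u
      rw [← hb, Polynomial.natDegree_mul hb0 hq0, hqdeg] at hdlt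
      omega
  have hmono : DCS4.phi w m f
      = Polynomial.C ((DCS4.phi w m f).coeff e) * Polynomial.X ^ e := by
    ext u
    rw [Polynomial.coeff_C_mul, Polynomial.coeff_X_pow]
    rcases eq_or_ne u e with rfl | hu
    · rw [if_pos rfl, mul_one]
    · rw [if_neg hu, mul_zero, hvan u hu]
  have hfe : f = (DCS4.phi w m f).coeff e := by
    have h6 := congrArg (Polynomial.eval 1) hmono
    rw [DCS4.phi_eval_one, Polynomial.eval_mul, Polynomial.eval_C, Polynomial.eval_pow,
      Polynomial.eval_X, one_pow, mul_one] at h6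
    exact h6
  have hchar : ∀ j ∈ f.support, m * j ≤ e ∧ n ∣ (e - m * j) := by
    intro j hj
    have hcj : f.coeff j =
        (if m * j ≤ e then (DCS4.psi w (f.coeff j)).coeff (e - m * j) else 0) := by
      conv_lhs => rw [hfe]
      rw [DCS4.phi_coeff, Polynomial.finset_sum_coeff,
        Finset.sum_eq_single_of_mem j hj]
      · split
        · rw [Polynomial.coeff_C_mul, Polynomial.coeff_X_pow, if_pos rfl, mul_one]
        · exact Polynomial.coeff_zero j
      · intro b hb hbj
        split
        · rw [Polynomial.coeff_C_mul, Polynomial.coeff_X_pow,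
            if_neg (fun hh => hbj hh.symm), mul_zero]
        · exact Polynomial.coeff_zero j
    have hj0 : f.coeff j ≠ 0 := Polynomial.mem_support_iff.mp hj
    by_cases hle : m * j ≤ e
    · refine ⟨hle, ?_⟩
      rw [if_pos hle] at hcj
      obtain ⟨sv, hsv⟩ := DCS4.psi_coeff_ne_zero w (by rw [← hcj]; exact hj0)
      rw [← hsv]
      exact hnw sv
    · rw [if_neg hle] at hcj
      exact absurd hcj hj0
  have hjeq : ∀ j ∈ f.support, j = f.natDegree := by
    intro j hj
    obtain ⟨hle, hdvd⟩ := hchar j hj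
    have hndsupp : f.natDegree ∈ f.support := Polynomial.natDegree_mem_support_of_nonzero hf0
    obtain ⟨hle0, hdvd0⟩ := hchar f.natDegree hndsupp
    obtain ⟨a1, ha1⟩ := hdvd
    obtain ⟨a0, ha0⟩ := hdvd0
    have he1 : e = m * j + n * a1 := by omega
    have he0 : e = m * f.natDegree + n * a0 := by omega
    have hmod : m * j ≡ m * f.natDegree [MOD n] := by
      show m * j % n = m * f.natDegree % n
      calc m * j % n = (m * j + n * a1) % n := (Nat.add_mul_mod_self_left _ _ _).symm
        _ = (m * f.natDegree + n * a0) % n := by rw [← he1, he0]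
        _ = m * f.natDegree % n := Nat.add_mul_mod_self_left _ _ _
    have hmod2 := Nat.ModEq.cancel_left_of_coprime (by rw [Nat.gcd_comm]; exact hmn) hmod
    have hjlt : j < n := lt_of_le_of_lt (Polynomial.le_natDegree_of_mem_supp j hj) hfdeg
    have hfin := hmod2
    rw [Nat.ModEq, Nat.mod_eq_of_lt hjlt, Nat.mod_eq_of_lt hfdeg] at hfin
    exact hfin
  set j0 : ℕ := f.natDegree with hj0def
  set a : MvPolynomial (Fin d) k := f.coeff j0 with hadef
  have ha0 : a ≠ 0 := fun hz => hf0 (Polynomial.leadingCoeff_eq_zero.mp hz)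
  have hfform : f = Polynomial.C a * Polynomial.X ^ j0 := by
    refine Polynomial.ext fun u => ?_
    rw [Polynomial.coeff_C_mul, Polynomial.coeff_X_pow]
    rcases eq_or_ne u j0 with rfl | hu
    · rw [if_pos rfl, mul_one]
    · rw [if_neg hu, mul_zero]
      by_contra hne
      exact hu (hjeq u (Polynomial.mem_support_iff.mpr hne))
  have hCmem : ∃ y, y * φ = Ideal.Quotient.mk I (Polynomial.C (h i0)) := by
    have hx : Ideal.Quotient.mk I (Polynomial.C (h i0)) ∈
        Ideal.span {Ideal.Quotient.mk I (Polynomial.X : Polynomial (MvPolynomial (Fin d) k)),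
          Ideal.Quotient.mk I (Polynomial.C (h i0))} :=
      Ideal.subset_span (Set.mem_insert_of_mem _ rfl)
    rw [hφ, Ideal.submodule_span_eq, Ideal.mem_span_singleton'] at hx
    exact hx
  have hq00 : q.coeff 0 = 0 - g := by
    rw [hqdef, Polynomial.coeff_sub, Polynomial.coeff_X_pow,
      if_neg (show ¬ (0 = n) by omega), Polynomial.coeff_C_zero]
  rcases Nat.eq_zero_or_pos j0 with hj00 | hj0pos
  · -- j0 = 0 : f = C a
    have hfC : f = Polynomial.C a := by rw [hfform, hj00, pow_zero, mul_one]
    obtain ⟨y', hy'⟩ := hXmem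
    obtain ⟨y, rfl⟩ := Ideal.Quotient.mk_surjective y'
    have h7 : Ideal.Quotient.mk I (y * f - Polynomial.X) = 0 := by
      rw [map_sub, map_mul, hπf, hy', sub_self]
    rw [Ideal.Quotient.eq_zero_iff_mem, hIdef, Ideal.mem_span_singleton'] at h7
    obtain ⟨v, hv⟩ := h7
    have hXeq : (Polynomial.X : Polynomial (MvPolynomial (Fin d) k))
        = y * Polynomial.C a - v * q := by
      rw [← hfC]
      linear_combination hv
    have e1 : ((y * Polynomial.C a - v * q).coeff 1) = y.coeff 1 * a - (0 - v.coeff 1 * g) := by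
      rw [Polynomial.coeff_sub, Polynomial.coeff_mul_C, hqdef, mul_sub, Polynomial.coeff_sub,
        Polynomial.coeff_mul_X_pow', if_neg (show ¬ n ≤ 1 by omega), Polynomial.coeff_mul_C]
    have hc1 : (1 : MvPolynomial (Fin d) k) = y.coeff 1 * a - (0 - v.coeff 1 * g) :=
      calc (1 : MvPolynomial (Fin d) k)
          = (Polynomial.X : Polynomial (MvPolynomial (Fin d) k)).coeff 1 :=
            Polynomial.coeff_X_one.symm
        _ = (y * Polynomial.C a - v * q).coeff 1 := by rw [← hXeq]
        _ = y.coeff 1 * a - (0 - v.coeff 1 * g) := e1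
    have hR : (s1 * Polynomial.X + t1 * Polynomial.C (h i0) - f).coeff 0
        = s1.coeff 0 * 0 + t1.coeff 0 * (h i0) - a := by
      rw [Polynomial.coeff_sub, Polynomial.coeff_add, Polynomial.mul_coeff_zero,
        Polynomial.mul_coeff_zero, Polynomial.coeff_X_zero, Polynomial.coeff_C_zero,
        hfC, Polynomial.coeff_C_zero]
    have hc0 : u1.coeff 0 * ((0 : MvPolynomial (Fin d) k) - g)
        = s1.coeff 0 * 0 + t1.coeff 0 * (h i0) - a := by
      rw [← hq00, ← Polynomial.mul_coeff_zero, hu1, hR]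
    have hc0' : a = t1.coeff 0 * h i0 + u1.coeff 0 * g := by linear_combination hc0
    have hdvda : h i0 ∣ a := by
      rw [hc0']
      exact dvd_add (Dvd.intro_left _ rfl) (h1dvdg.mul_left _)
    have hdvd1 : h i0 ∣ (1 : MvPolynomial (Fin d) k) := by
      have hc1' : (1 : MvPolynomial (Fin d) k) = y.coeff 1 * a + v.coeff 1 * g := by
        linear_combination hc1
      rw [hc1']
      exact dvd_add (hdvda.mul_left _) (h1dvdg.mul_left _)
    exact (hirr i0).not_isUnit (isUnit_of_dvd_one hdvd1)
  · -- j0 > 0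
    obtain ⟨y', hy'⟩ := hCmem
    obtain ⟨y, rfl⟩ := Ideal.Quotient.mk_surjective y'
    have h7 : Ideal.Quotient.mk I (y * f - Polynomial.C (h i0)) = 0 := by
      rw [map_sub, map_mul, hπf, hy', sub_self]
    rw [Ideal.Quotient.eq_zero_iff_mem, hIdef, Ideal.mem_span_singleton'] at h7
    obtain ⟨v, hv⟩ := h7
    have hf00 : f.coeff 0 = 0 := by
      rw [hfform, Polynomial.coeff_C_mul, Polynomial.coeff_X_pow,
        if_neg (show ¬ (0 = j0) by omega), mul_zero]
    have hR2 : (y * f - Polynomial.C (h i0)).coeff 0 = y.coeff 0 * 0 - h i0 := by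
      rw [Polynomial.coeff_sub, Polynomial.mul_coeff_zero, hf00, Polynomial.coeff_C_zero]
    have hc0 : v.coeff 0 * ((0 : MvPolynomial (Fin d) k) - g)
        = y.coeff 0 * 0 - h i0 := by
      rw [← hq00, ← Polynomial.mul_coeff_zero, hv, hR2]
    have hg2 : g = h i0 * ∏ i ∈ Finset.univ.erase i0, h i := by
      rw [hg, Finset.mul_prod_erase Finset.univ h (Finset.mem_univ i0)]
    have hkey : h i0 * (v.coeff 0 * (∏ i ∈ Finset.univ.erase i0, h i) - 1) = 0 := by
      linear_combination -hc0 - v.coeff 0 * hg2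
    have hQunit : IsUnit (∏ i ∈ Finset.univ.erase i0, h i) := by
      rcases mul_eq_zero.mp hkey with hz | hz
      · exact absurd hz (hh0 i0)
      · exact IsUnit.of_mul_eq_one (v.coeff 0) (by linear_combination hz)
    have hi1 : (⟨1, by omega⟩ : Fin r) ∈ Finset.univ.erase i0 := by
      rw [Finset.mem_erase]
      exact ⟨by simp [hi0def, Fin.ext_iff], Finset.mem_univ _⟩
    exact (hirr ⟨1, by omega⟩).not_isUnit
      (isUnit_of_dvd_unit (Finset.dvd_prod_of_mem h hi1) hQunit)
end

section
/- Let k be a field, n ≥ 2, and let g ∈ k[x_1,…,x_d] be a nonconstant weighted homogeneous polynomial (with respect to positive integer weights on x_1,…,x_d) with irreducible factor h. Suppose the hypersurface ring R = k[z,x_0,x_1,…,x_d]/(z^n − x_0·g) is a normal domain. Then the ideal (z, h)R is a height-one prime ideal of R that is not principal; in particular, R is not a unique factorization domain. -/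
open Polynomial MvPolynomial in
private theorem q6_descent {α : Type*} [CommRing α] [IsDomain α] [WfDvdMonoid α]
    {p : α} (hp : Prime p) {Q : Ideal α} (hQ : Q.IsPrime) (hlt : Q < Ideal.span {p}) :
    Q = ⊥ := by
  have hpQ : p ∉ Q := fun hmem =>
    absurd (le_antisymm hlt.le ((Ideal.span_singleton_le_iff_mem _).mpr hmem)) hlt.ne
  have key : ∀ kk : ℕ, ∀ a ∈ Q, p ^ kk ∣ a := by
    intro kk
    induction kk with
    | zero => intro a _; simp
    | succ kk ih =>
      intro a ha
      obtain ⟨b, rfl⟩ := Ideal.mem_span_singleton.mp (hlt.le ha)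
      have hb : b ∈ Q := (hQ.mem_or_mem ha).resolve_left hpQ
      obtain ⟨c, rfl⟩ := ih b hb
      exact ⟨c, by ring⟩
  rw [eq_bot_iff]
  intro a ha
  rw [Ideal.mem_bot]
  by_contra h0
  obtain ⟨t, ht⟩ := FiniteMultiplicity.of_not_isUnit hp.not_unit h0
  exact ht (key (t + 1) a ha)

set_option maxHeartbeats 1000000 in
set_option synthInstance.maxHeartbeats 400000 in
open Polynomial MvPolynomial TrivSqZeroExt in
private theorem q6_key {k : Type*} [Field k] {d n : ℕ} (hn : 2 ≤ n)
    (g h : MvPolynomial (Fin d) k) (hirr : Irreducible h) (hdvd : h ∣ g)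
    (f : Polynomial (MvPolynomial (Fin (d + 1)) k))
    (hf : f = Polynomial.X ^ n - Polynomial.C (MvPolynomial.X 0 * rename Fin.succ g))
    [IsDomain (Polynomial (MvPolynomial (Fin (d + 1)) k) ⧸ Ideal.span {f})] :
    (∃ hp : (Ideal.span {Ideal.Quotient.mk (Ideal.span {f}) Polynomial.X,
        Ideal.Quotient.mk (Ideal.span {f}) (Polynomial.C (rename Fin.succ h))}).IsPrime,
      Order.height (⟨_, hp⟩ : PrimeSpectrum
          (Polynomial (MvPolynomial (Fin (d + 1)) k) ⧸ Ideal.span {f})) = 1 ∧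
      ¬ Submodule.IsPrincipal (Ideal.span {Ideal.Quotient.mk (Ideal.span {f}) Polynomial.X,
        Ideal.Quotient.mk (Ideal.span {f}) (Polynomial.C (rename Fin.succ h))}) ) ∧
    ¬ UniqueFactorizationMonoid
        (Polynomial (MvPolynomial (Fin (d + 1)) k) ⧸ Ideal.span {f}) := by
  classical
  have hn0 : n ≠ 0 := by omega
  have hprime_h : Prime h := hirr.prime
  -- H := rename Fin.succ h is prime in SS := MvPolynomial (Fin (d+1)) k
  have hHC : MvPolynomial.finSuccEquiv k d (rename Fin.succ h) = Polynomial.C h := by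
    have e : ((MvPolynomial.finSuccEquiv k d).toAlgHom.comp
        (MvPolynomial.rename (R := k) Fin.succ))
        = ((Polynomial.CAlgHom (R := k) (A := MvPolynomial (Fin d) k)).restrictScalars k) := by
      apply MvPolynomial.algHom_ext
      intro i
      simp [MvPolynomial.finSuccEquiv_X_succ, Polynomial.CAlgHom]
    simpa using DFunLike.congr_fun e h
  have hprimeH : Prime (rename Fin.succ h : MvPolynomial (Fin (d + 1)) k) := by
    rw [← MulEquiv.prime_iff (MvPolynomial.finSuccEquiv k d).toMulEquiv]
    show Prime (MvPolynomial.finSuccEquiv k d (rename Fin.succ h))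
    rw [hHC]
    exact Polynomial.prime_C_iff.mpr hprime_h
  have hH0 : (rename Fin.succ h : MvPolynomial (Fin (d + 1)) k) ≠ 0 := hprimeH.ne_zero
  set H : MvPolynomial (Fin (d + 1)) k := rename Fin.succ h with hHdef
  haveI hPH : (Ideal.span {H}).IsPrime := (Ideal.span_singleton_prime hH0).mpr hprimeH
  -- the homomorphism ρ : R → SS/(H)
  set mkH : MvPolynomial (Fin (d + 1)) k →+* MvPolynomial (Fin (d + 1)) k ⧸ Ideal.span {H} :=
    Ideal.Quotient.mk (Ideal.span {H}) with hmkH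
  set mkI := Ideal.Quotient.mk (Ideal.span {f}) with hmkI
  have hHdvd : H ∣ MvPolynomial.X 0 * rename Fin.succ g := by
    obtain ⟨w, hw⟩ := hdvd
    exact Dvd.dvd.mul_left ⟨rename Fin.succ w, by rw [hw, map_mul]⟩ _
  have hker0 : Ideal.span {f} ≤ RingHom.ker (Polynomial.eval₂RingHom mkH 0) := by
    rw [Ideal.span_le, Set.singleton_subset_iff]
    rw [SetLike.mem_coe, RingHom.mem_ker, Polynomial.coe_eval₂RingHom, Polynomial.eval₂_at_zero,
      hf]
    simp only [Polynomial.coeff_sub, Polynomial.coeff_X_pow, if_neg (Ne.symm hn0),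
      Polynomial.coeff_C_zero, zero_sub, map_neg, neg_eq_zero]
    exact Ideal.Quotient.eq_zero_iff_mem.mpr (Ideal.mem_span_singleton.mpr hHdvd)
  set ρ : (Polynomial (MvPolynomial (Fin (d + 1)) k) ⧸ Ideal.span {f}) →+*
      (MvPolynomial (Fin (d + 1)) k ⧸ Ideal.span {H}) :=
    Ideal.Quotient.lift (Ideal.span {f}) (Polynomial.eval₂RingHom mkH 0)
      (fun a ha => RingHom.mem_ker.mp (hker0 ha)) with hρdef
  have hρmk : ∀ q : Polynomial (MvPolynomial (Fin (d + 1)) k),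
      ρ (mkI q) = mkH (q.coeff 0) := by
    intro q
    rw [hρdef, hmkI, Ideal.Quotient.lift_mk, Polynomial.coe_eval₂RingHom,
      Polynomial.eval₂_at_zero]
  set z := mkI Polynomial.X with hz
  set Hbar := mkI (Polynomial.C H) with hHbar
  set P := Ideal.span {z, Hbar} with hPdef
  have hznmem : z ∈ P := Ideal.subset_span (by simp)
  have hHmem : Hbar ∈ P := Ideal.subset_span (by simp)
  have hkerP : P = RingHom.ker ρ := by
    apply le_antisymm
    · rw [hPdef, Ideal.span_le]
      rintro x hx
      simp only [Set.mem_insert_iff, Set.mem_singleton_iff] at hx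
      rcases hx with rfl | rfl
      · rw [SetLike.mem_coe, RingHom.mem_ker, hz, hρmk]
        simp
      · rw [SetLike.mem_coe, RingHom.mem_ker, hHbar, hρmk, Polynomial.coeff_C_zero]
        exact Ideal.Quotient.eq_zero_iff_mem.mpr (Ideal.mem_span_singleton_self H)
    · intro x hx
      obtain ⟨q, rfl⟩ := Ideal.Quotient.mk_surjective x
      rw [RingHom.mem_ker] at hx
      rw [show (Ideal.Quotient.mk (Ideal.span {f})) q = mkI q from rfl, hρmk] at hx
      obtain ⟨w, hw⟩ := Ideal.mem_span_singleton.mp (Ideal.Quotient.eq_zero_iff_mem.mp hx)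
      rw [hPdef, Ideal.mem_span_pair]
      refine ⟨mkI q.divX, mkI (Polynomial.C w), ?_⟩
      rw [hz, hHbar, ← map_mul, ← map_mul, ← map_add]
      congr 1
      rw [← Polynomial.C_mul, mul_comm w H, ← hw, mul_comm q.divX Polynomial.X]
      exact q.X_mul_divX_add
  haveI hPprime : P.IsPrime := by rw [hkerP]; exact RingHom.ker_isPrime ρ
  -- the homomorphism ψ : R → DualNumber (MvPolynomial (Fin d) k)
  set φS : MvPolynomial (Fin (d + 1)) k →+* MvPolynomial (Fin d) k :=
    (MvPolynomial.aeval (R := k) (Fin.cases 0 MvPolynomial.X)).toRingHom with hφS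
  have hφS0 : φS (MvPolynomial.X 0) = 0 := by simp [hφS]
  have hφSH : ∀ p : MvPolynomial (Fin d) k, φS (rename Fin.succ p) = p := by
    intro p
    rw [hφS]
    show (MvPolynomial.aeval (R := k) (Fin.cases 0 MvPolynomial.X)) (rename Fin.succ p) = p
    rw [MvPolynomial.aeval_rename]
    have : (Fin.cases (0 : MvPolynomial (Fin d) k) MvPolynomial.X ∘ Fin.succ) = MvPolynomial.X :=
      funext fun i => by simp
    rw [this, MvPolynomial.aeval_X_left_apply]
  have hepsn : (DualNumber.eps : DualNumber (MvPolynomial (Fin d) k)) ^ n = 0 := by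
    have h2 : (DualNumber.eps : DualNumber (MvPolynomial (Fin d) k)) ^ 2 = 0 := by
      rw [sq, DualNumber.eps_mul_eps]
    calc (DualNumber.eps : DualNumber (MvPolynomial (Fin d) k)) ^ n
        = DualNumber.eps ^ 2 * DualNumber.eps ^ (n - 2) := by
          rw [← pow_add]; congr 1; omega
      _ = 0 := by rw [h2, zero_mul]
  set ψ0 : Polynomial (MvPolynomial (Fin (d + 1)) k) →+* DualNumber (MvPolynomial (Fin d) k) :=
    Polynomial.eval₂RingHom ((TrivSqZeroExt.inlHom _ _).comp φS) DualNumber.eps with hψ0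
  have hψ0f : ψ0 f = 0 := by
    rw [hf, hψ0, Polynomial.coe_eval₂RingHom, Polynomial.eval₂_sub, Polynomial.eval₂_pow,
      Polynomial.eval₂_X, Polynomial.eval₂_C, hepsn]
    simp [hφS0]
  set ψ : (Polynomial (MvPolynomial (Fin (d + 1)) k) ⧸ Ideal.span {f}) →+*
      DualNumber (MvPolynomial (Fin d) k) :=
    Ideal.Quotient.lift (Ideal.span {f}) ψ0 (fun a ha => by
      obtain ⟨b, rfl⟩ := Ideal.mem_span_singleton.mp ha
      rw [map_mul, hψ0f, zero_mul]) with hψdef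
  have hψmk : ∀ q, ψ (mkI q) = ψ0 q := fun q => by rw [hψdef, hmkI, Ideal.Quotient.lift_mk]
  have hψz : ψ z = DualNumber.eps := by
    rw [hz, hψmk, hψ0, Polynomial.coe_eval₂RingHom, Polynomial.eval₂_X]
  have hψH : ψ Hbar = TrivSqZeroExt.inl h := by
    rw [hHbar, hψmk, hψ0, Polynomial.coe_eval₂RingHom, Polynomial.eval₂_C]
    simp [hφSH h]; exact congrArg _ (hφSH h)
  have hz0 : z ≠ 0 := by
    intro e
    have := congrArg (fun t => TrivSqZeroExt.snd (ψ t)) e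
    simp only [map_zero, hψz] at this
    rw [DualNumber.snd_eps, TrivSqZeroExt.snd_zero] at this
    exact one_ne_zero this
  have hh0 : h ≠ 0 := hprime_h.ne_zero
  have hPneTop : P ≠ ⊤ := hPprime.ne_top
  -- non-principality
  have hnp : ¬ Submodule.IsPrincipal P := by
    rintro ⟨p, hp⟩
    rw [Ideal.submodule_span_eq] at hp
    obtain ⟨a, ha⟩ := Ideal.mem_span_singleton'.mp (hp ▸ hznmem)
    obtain ⟨b, hb⟩ := Ideal.mem_span_singleton'.mp (hp ▸ hHmem)
    have hpP : p ∈ P := hp ▸ Ideal.mem_span_singleton_self p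
    obtain ⟨u, v, huv⟩ := Ideal.mem_span_pair.mp (hPdef ▸ hpP)
    apply hirr.not_isUnit
    have e1 := congrArg ψ ha
    rw [map_mul, hψz] at e1
    have e2 := congrArg ψ hb
    rw [map_mul, hψH] at e2
    have e3 := congrArg ψ huv
    rw [map_add, map_mul, map_mul, hψz, hψH] at e3
    have c1 : (ψ a).fst * (ψ p).fst = 0 := by
      have := congrArg TrivSqZeroExt.fst e1
      rwa [TrivSqZeroExt.fst_mul, DualNumber.fst_eps] at this
    have c1' : (ψ a).fst * (ψ p).snd + (ψ p).fst * (ψ a).snd = 1 := by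
      have := congrArg TrivSqZeroExt.snd e1
      rw [TrivSqZeroExt.snd_mul, DualNumber.snd_eps] at this
      rw [smul_eq_mul, MulOpposite.smul_eq_mul_unop, MulOpposite.unop_op] at this
      rw [← this]; ring
    have c2 : (ψ b).fst * (ψ p).fst = h := by
      have := congrArg TrivSqZeroExt.fst e2
      rwa [TrivSqZeroExt.fst_mul, TrivSqZeroExt.fst_inl] at this
    have c3 : (ψ p).fst = (ψ v).fst * h := by
      have := congrArg TrivSqZeroExt.fst e3
      rw [TrivSqZeroExt.fst_add, TrivSqZeroExt.fst_mul, TrivSqZeroExt.fst_mul,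
        DualNumber.fst_eps, TrivSqZeroExt.fst_inl, mul_zero, zero_add] at this
      exact this.symm
    have hBV : (ψ b).fst * (ψ v).fst = 1 := by
      have e : ((ψ b).fst * (ψ v).fst) * h = 1 * h := by
        linear_combination -(ψ b).fst * c3 + c2
      exact mul_right_cancel₀ hh0 e
    have hV0 : (ψ v).fst ≠ 0 := by
      intro e
      rw [e, mul_zero] at hBV
      exact zero_ne_one hBV
    have hπ0 : (ψ p).fst ≠ 0 := by
      rw [c3]
      exact mul_ne_zero hV0 hh0
    have hα0 : (ψ a).fst = 0 := (mul_eq_zero.mp c1).resolve_right hπ0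
    have hfin : (ψ p).fst * (ψ a).snd = 1 := by
      rwa [hα0, zero_mul, zero_add] at c1'
    refine IsUnit.of_mul_eq_one (a := h) ((ψ v).fst * (ψ a).snd) ?_
    rw [← hfin, c3]; ring
  -- integrality of R over SS
  have halgmk : ∀ s : MvPolynomial (Fin (d + 1)) k,
      algebraMap (MvPolynomial (Fin (d + 1)) k)
        (Polynomial (MvPolynomial (Fin (d + 1)) k) ⧸ Ideal.span {f}) s
        = mkI (Polynomial.C s) := fun s => by
        rw [hmkI, ← Polynomial.algebraMap_eq, Ideal.Quotient.mk_algebraMap]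
  have hroot : ∀ q : Polynomial (MvPolynomial (Fin (d + 1)) k),
      Polynomial.aeval (mkI Polynomial.X) q = mkI q := by
    intro q
    conv_rhs => rw [← Polynomial.eval₂_C_X (p := q)]
    rw [Polynomial.aeval_def, Polynomial.hom_eval₂]
    rfl
  have hX : IsIntegral (MvPolynomial (Fin (d + 1)) k) (mkI Polynomial.X) := by
    refine ⟨f, by rw [hf]; exact Polynomial.monic_X_pow_sub_C _ hn0, ?_⟩
    show Polynomial.eval₂ _ _ f = 0
    rw [← Polynomial.aeval_def, hroot f]
    exact Ideal.Quotient.eq_zero_iff_mem.mpr (Ideal.subset_span rfl)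
  have hint : ∀ x : Polynomial (MvPolynomial (Fin (d + 1)) k) ⧸ Ideal.span {f},
      IsIntegral (MvPolynomial (Fin (d + 1)) k) x := by
    intro x
    obtain ⟨q, rfl⟩ := Ideal.Quotient.mk_surjective x
    refine IsIntegral.of_mem_of_fg (Algebra.adjoin _ {mkI Polynomial.X})
      hX.fg_adjoin_singleton _ ?_
    rw [show Ideal.Quotient.mk (Ideal.span {f}) q = mkI q from rfl, ← hroot q,
      Algebra.adjoin_singleton_eq_range_aeval]
    exact Set.mem_range_self q
  haveI : Algebra.IsIntegral (MvPolynomial (Fin (d + 1)) k)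
      (Polynomial (MvPolynomial (Fin (d + 1)) k) ⧸ Ideal.span {f}) := ⟨hint⟩
  have hcomapP : Ideal.comap (algebraMap (MvPolynomial (Fin (d + 1)) k) _) P
      = Ideal.span {H} := by
    ext s
    rw [Ideal.mem_comap, halgmk, hkerP, RingHom.mem_ker, hρmk, Polynomial.coeff_C_zero]
    exact Ideal.Quotient.eq_zero_iff_mem
  -- every prime strictly below P is ⊥
  have hQbot : ∀ Q : Ideal (Polynomial (MvPolynomial (Fin (d + 1)) k) ⧸ Ideal.span {f}),
      Q.IsPrime → Q < P → Q = ⊥ := by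
    intro Q hQ hQP
    haveI := hQ
    obtain ⟨x, hxP, hxQ⟩ := SetLike.exists_of_lt hQP
    have hlt := Ideal.comap_lt_comap_of_integral_mem_sdiff (R := MvPolynomial (Fin (d + 1)) k)
      (S := Polynomial (MvPolynomial (Fin (d + 1)) k) ⧸ Ideal.span {f}) (I := Q) (J := P) (x := x)
      hQP.le ⟨hxP, hxQ⟩ (by exact hint x)
    rw [hcomapP] at hlt
    have hcb : Ideal.comap (algebraMap (MvPolynomial (Fin (d + 1)) k) _) Q = ⊥ :=
      q6_descent hprimeH (Ideal.IsPrime.comap _) hlt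
    exact Ideal.eq_bot_of_comap_eq_bot (R := MvPolynomial (Fin (d + 1)) k)
      (S := Polynomial (MvPolynomial (Fin (d + 1)) k) ⧸ Ideal.span {f}) (by exact hcb)
  have hPbot : P ≠ ⊥ := by
    intro e
    rw [e, Ideal.mem_bot] at hznmem
    exact hz0 hznmem
  refine ⟨⟨hPprime, ?_, hnp⟩, ?_⟩
  · -- height = 1
    have hbotlt : (⟨⊥, Ideal.bot_prime⟩ : PrimeSpectrum
        (Polynomial (MvPolynomial (Fin (d + 1)) k) ⧸ Ideal.span {f}))
        < ⟨P, hPprime⟩ := by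
      refine lt_of_le_of_ne bot_le ?_
      intro e
      exact hPbot (congrArg PrimeSpectrum.asIdeal e).symm
    apply le_antisymm
    · rw [show (1 : ℕ∞) = ((1 : ℕ) : ℕ∞) from rfl, Order.height_le_coe_iff]
      intro y hy
      have hylt : y.asIdeal < P := hy
      have hyb : y.asIdeal = ⊥ := hQbot y.asIdeal y.isPrime hylt
      have hmin : IsMin y := by
        intro w hw
        have : w.asIdeal ≤ y.asIdeal := hw
        have hwb : w.asIdeal = ⊥ := le_antisymm (hyb ▸ this) bot_le
        have : w = y := PrimeSpectrum.ext (hwb.trans hyb.symm)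
        exact this.ge
      rw [Order.height_eq_zero.mpr hmin]
      norm_num
    · have hne : Order.height (⟨P, hPprime⟩ : PrimeSpectrum
          (Polynomial (MvPolynomial (Fin (d + 1)) k) ⧸ Ideal.span {f})) ≠ 0 :=
        fun h0 => hbotlt.not_isMin (Order.height_eq_zero.mp h0)
      exact ENat.one_le_iff_ne_zero.mpr hne
  · -- not a UFD
    intro hufm
    obtain ⟨ms, hms, hassoc⟩ := UniqueFactorizationMonoid.exists_prime_factors z hz0
    obtain ⟨uu, huu⟩ := hassoc
    have hprodP : ms.prod ∈ P := by
      have hmem : ms.prod * (uu : _) ∈ P := by rw [huu]; exact hznmem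
      exact (hPprime.mem_or_mem hmem).resolve_right
        (fun hc => hPneTop (Ideal.eq_top_of_isUnit_mem _ hc uu.isUnit))
    obtain ⟨q, hqms, hqP⟩ := (hPprime.multiset_prod_mem_iff_exists_mem ms).mp hprodP
    have hq : Prime q := hms q hqms
    have hle : Ideal.span {q} ≤ P := (Ideal.span_singleton_le_iff_mem _).mpr hqP
    rcases eq_or_lt_of_le hle with heq | hlt
    · exact hnp ⟨⟨q, by rw [← heq, Ideal.submodule_span_eq]⟩⟩
    · have hb := hQbot (Ideal.span {q}) ((Ideal.span_singleton_prime hq.ne_zero).mpr hq) hlt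
      rw [Ideal.span_singleton_eq_bot] at hb
      exact hq.ne_zero hb




set_option maxHeartbeats 1000000 in
set_option synthInstance.maxHeartbeats 400000 in
/-- Let `k` be a field, `n ≥ 2`, and let `g ∈ k[x_1,…,x_d]` be a nonconstant
weighted homogeneous polynomial (with respect to positive integer weights), with irreducible
factor `h`.  Suppose `R = k[z,x_0,x_1,…,x_d]/(zⁿ − x_0·g)` is a normal domain.  Then `(z,h)R`
is a height-one prime ideal of `R` that is not principal; in particular `R` is not a unique
factorization domain.  Here `k[x_0,x_1,…,x_d]` is realized as `MvPolynomial (Fin (d+1)) k`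
with `x_0` the variable of index `0` and `x_1,…,x_d` included via `rename Fin.succ`, and `R`
is the polynomial ring in `z` over it, modulo `zⁿ − x_0·g`. -/
theorem divisor_class_stmt_6 {k : Type*} [Field k] {d n m : ℕ} (hn : 2 ≤ n)
    (c : Fin d → ℕ) (hc : ∀ i, 0 < c i)
    (g : MvPolynomial (Fin d) k) (hwh : g.IsWeightedHomogeneous c m)
    (hnc : 0 < g.totalDegree)
    (h : MvPolynomial (Fin d) k) (hirr : Irreducible h) (hdvd : h ∣ g)
    [IsDomain (Polynomial (MvPolynomial (Fin (d + 1)) k) ⧸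
      Ideal.span {Polynomial.X ^ n -
        Polynomial.C (MvPolynomial.X 0 * MvPolynomial.rename Fin.succ g)})]
    [IsIntegrallyClosed (Polynomial (MvPolynomial (Fin (d + 1)) k) ⧸
      Ideal.span {Polynomial.X ^ n -
        Polynomial.C (MvPolynomial.X 0 * MvPolynomial.rename Fin.succ g)})] :
    (∃ hp : (Ideal.span
        {Ideal.Quotient.mk (Ideal.span {Polynomial.X ^ n -
            Polynomial.C (MvPolynomial.X 0 * MvPolynomial.rename Fin.succ g)}) Polynomial.X,
         Ideal.Quotient.mk (Ideal.span {Polynomial.X ^ n -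
            Polynomial.C (MvPolynomial.X 0 * MvPolynomial.rename Fin.succ g)})
           (Polynomial.C (MvPolynomial.rename Fin.succ h))} :
        Ideal (Polynomial (MvPolynomial (Fin (d + 1)) k) ⧸
          Ideal.span {Polynomial.X ^ n -
            Polynomial.C (MvPolynomial.X 0 * MvPolynomial.rename Fin.succ g)})).IsPrime,
      Order.height (⟨_, hp⟩ : PrimeSpectrum (Polynomial (MvPolynomial (Fin (d + 1)) k) ⧸
        Ideal.span {Polynomial.X ^ n -
          Polynomial.C (MvPolynomial.X 0 * MvPolynomial.rename Fin.succ g)})) = 1 ∧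
      ¬ Submodule.IsPrincipal (Ideal.span
        {Ideal.Quotient.mk (Ideal.span {Polynomial.X ^ n -
            Polynomial.C (MvPolynomial.X 0 * MvPolynomial.rename Fin.succ g)}) Polynomial.X,
         Ideal.Quotient.mk (Ideal.span {Polynomial.X ^ n -
            Polynomial.C (MvPolynomial.X 0 * MvPolynomial.rename Fin.succ g)})
           (Polynomial.C (MvPolynomial.rename Fin.succ h))} :
        Ideal (Polynomial (MvPolynomial (Fin (d + 1)) k) ⧸
          Ideal.span {Polynomial.X ^ n -
            Polynomial.C (MvPolynomial.X 0 * MvPolynomial.rename Fin.succ g)}))) ∧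
    ¬ UniqueFactorizationMonoid (Polynomial (MvPolynomial (Fin (d + 1)) k) ⧸
      Ideal.span {Polynomial.X ^ n -
        Polynomial.C (MvPolynomial.X 0 * MvPolynomial.rename Fin.succ g)}) := by
  exact q6_key hn g h hirr hdvd _ rfl
end

section
/- Let k be a field, let a, b, c be positive integers with gcd(a,b) = 1, and let f be an irreducible factor in k[x_1,x_2] of the polynomial g = x_1^{ac} + x_2^{bc}. Then f is a polynomial in x_1^a and x_2^b; that is, there exists a polynomial q ∈ k[s,t] in two variables such that f = q(x_1^a, x_2^b). -/
open MvPolynomial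

lemma fin2_decomp (m : Fin 2 →₀ ℕ) :
    m = Finsupp.single 0 (m 0) + Finsupp.single 1 (m 1) := by
  ext i
  fin_cases i <;> simp [Finsupp.single_apply]

lemma monomial_eq_prod {R : Type*} [CommSemiring R] (m : Fin 2 →₀ ℕ) (r : R) :
    (MvPolynomial.monomial m r : MvPolynomial (Fin 2) R)
      = MvPolynomial.C r * MvPolynomial.X 0 ^ (m 0) * MvPolynomial.X 1 ^ (m 1) := by
  conv_lhs => rw [fin2_decomp m]
  rw [MvPolynomial.monomial_single_add, ← add_zero (Finsupp.single 1 (m 1)),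
    MvPolynomial.monomial_single_add, MvPolynomial.monomial_zero']
  ring

lemma poly_monomial_factor {R : Type*} [CommRing R] [IsDomain R] {P Q : Polynomial R}
    {u : R} {n : ℕ} (hu : u ≠ 0) (h : P * Q = Polynomial.C u * Polynomial.X ^ n) :
    P = Polynomial.C (P.coeff P.natDegree) * Polynomial.X ^ P.natDegree := by
  have hP : P ≠ 0 := by
    rintro rfl
    rw [zero_mul] at h
    exact hu (by have := h.symm
                 rwa [Polynomial.C_mul_X_pow_eq_monomial, Polynomial.monomial_eq_zero_iff] at this)
  have hQ : Q ≠ 0 := by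
    rintro rfl
    rw [mul_zero] at h
    exact hu (by have := h.symm
                 rwa [Polynomial.C_mul_X_pow_eq_monomial, Polynomial.monomial_eq_zero_iff] at this)
  have hdeg : P.natDegree + Q.natDegree = n := by
    rw [← Polynomial.natDegree_mul hP hQ, h, Polynomial.natDegree_C_mul_X_pow _ _ hu]
  have htr : P.natTrailingDegree + Q.natTrailingDegree = n := by
    rw [← Polynomial.natTrailingDegree_mul hP hQ, h, Polynomial.C_mul_X_pow_eq_monomial,
      Polynomial.natTrailingDegree_monomial hu]
  have h1 := P.natTrailingDegree_le_natDegree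
  have h2 := Q.natTrailingDegree_le_natDegree
  have heq : P.natTrailingDegree = P.natDegree := by omega
  ext j
  rw [Polynomial.coeff_C_mul, Polynomial.coeff_X_pow]
  by_cases hj : j = P.natDegree
  · simp [hj]
  · rw [if_neg hj, mul_zero]
    rcases lt_or_gt_of_ne hj with hlt | hgt
    · exact Polynomial.coeff_eq_zero_of_lt_natTrailingDegree (by omega)
    · exact Polynomial.coeff_eq_zero_of_natDegree_lt hgt

/-- Let `k` be a field, `a, b, c` positive integers with `gcd(a,b) = 1`, and
let `f` be an irreducible factor in `k[x₁,x₂]` of `g = x₁^{ac} + x₂^{bc}`.  Then `f` is a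
polynomial in `x₁^a` and `x₂^b`: there is a polynomial `q` in two variables with
`f = q(x₁^a, x₂^b)`.  Here `k[x₁,x₂]` is realized as `MvPolynomial (Fin 2) k`, and the
substitution is expressed by `MvPolynomial.aeval`. -/
theorem divisor_class_stmt_11 {k : Type*} [Field k] {a b c : ℕ}
    (ha : 0 < a) (hb : 0 < b) (hc : 0 < c) (hab : Nat.Coprime a b)
    (f : MvPolynomial (Fin 2) k) (hirr : Irreducible f)
    (hdvd : f ∣ (MvPolynomial.X 0 ^ (a * c) + MvPolynomial.X 1 ^ (b * c) :
      MvPolynomial (Fin 2) k)) :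
    ∃ q : MvPolynomial (Fin 2) k,
      f = MvPolynomial.aeval
        ![(MvPolynomial.X 0 ^ a : MvPolynomial (Fin 2) k), MvPolynomial.X 1 ^ b] q := by
  classical
  set g : MvPolynomial (Fin 2) k := MvPolynomial.X 0 ^ (a * c) + MvPolynomial.X 1 ^ (b * c)
    with hgdef
  obtain ⟨f', hg⟩ := hdvd
  have hfne : f ≠ 0 := hirr.ne_zero
  -- g is nonzero
  have hgne : g ≠ 0 := by
    have hneq : ¬ (Finsupp.single (1 : Fin 2) (b * c) = Finsupp.single (0 : Fin 2) (a * c)) := by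
      rw [Finsupp.single_eq_single_iff]
      rintro (⟨h1, -⟩ | ⟨h1, h2⟩)
      · exact absurd h1 (by decide)
      · exact (Nat.mul_pos hb hc).ne' h1
    have hco : MvPolynomial.coeff (Finsupp.single (0 : Fin 2) (a * c)) g = 1 := by
      rw [hgdef, MvPolynomial.coeff_add, MvPolynomial.coeff_X_pow, MvPolynomial.coeff_X_pow,
        if_pos rfl, if_neg hneq, add_zero]
    intro h0
    rw [h0, MvPolynomial.coeff_zero] at hco
    exact zero_ne_one hco
  have hf'ne : f' ≠ 0 := by
    rintro rfl
    rw [mul_zero] at hg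
    exact hgne hg
  -- the homogenizing map
  set Φ : MvPolynomial (Fin 2) k →ₐ[k] Polynomial (MvPolynomial (Fin 2) k) :=
    MvPolynomial.aeval ![Polynomial.C (MvPolynomial.X 0) * Polynomial.X ^ b,
      Polynomial.C (MvPolynomial.X 1) * Polynomial.X ^ a] with hΦdef
  have hΦX0 : Φ (MvPolynomial.X 0) = Polynomial.C (MvPolynomial.X 0) * Polynomial.X ^ b := by
    rw [hΦdef, MvPolynomial.aeval_X]; rfl
  have hΦX1 : Φ (MvPolynomial.X 1) = Polynomial.C (MvPolynomial.X 1) * Polynomial.X ^ a := by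
    rw [hΦdef, MvPolynomial.aeval_X]; rfl
  have hΦC : ∀ r : k, Φ (MvPolynomial.C r) = Polynomial.C (MvPolynomial.C r) := by
    intro r
    rw [hΦdef, MvPolynomial.aeval_C, Polynomial.algebraMap_apply, MvPolynomial.algebraMap_eq]
  have hΦmono : ∀ (m : Fin 2 →₀ ℕ) (r : k),
      Φ (MvPolynomial.monomial m r)
        = Polynomial.C (MvPolynomial.monomial m r) * Polynomial.X ^ (b * m 0 + a * m 1) := by
    intro m r
    rw [monomial_eq_prod, map_mul, map_mul, map_pow, map_pow, hΦX0, hΦX1, hΦC,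
      mul_pow, mul_pow, ← Polynomial.C_pow, ← Polynomial.C_pow, ← pow_mul, ← pow_mul,
      Polynomial.C_mul, Polynomial.C_mul, pow_add]
    ring
  -- Φ g is a monomial in X
  have hΦg : Φ g = Polynomial.C g * Polynomial.X ^ (a * b * c) := by
    rw [hgdef, map_add, map_pow, map_pow, hΦX0, hΦX1, mul_pow, mul_pow,
      ← Polynomial.C_pow, ← Polynomial.C_pow, ← pow_mul, ← pow_mul, Polynomial.C_add, add_mul]
    ring_nf
  have hmul : Φ f * Φ f' = Polynomial.C g * Polynomial.X ^ (a * b * c) := by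
    rw [← map_mul, ← hg, hΦg]
  -- Φ f is a monomial in X
  have hΦfmono := poly_monomial_factor hgne hmul
  set d : ℕ := (Φ f).natDegree with hd
  -- evaluating at X = 1 recovers f, so the coefficient is f itself
  have hev : ∀ p : MvPolynomial (Fin 2) k, Polynomial.eval 1 (Φ p) = p := by
    intro p
    have hcomp : ((Polynomial.evalRingHom
        (1 : MvPolynomial (Fin 2) k)).comp Φ.toRingHom) = RingHom.id _ := by
      apply MvPolynomial.ringHom_ext
      · intro r
        simp [hΦC r]
      · intro i
        fin_cases i <;>
          simp [hΦX0, hΦX1]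
    have := RingHom.congr_fun hcomp p
    simpa using this
  have hcoef : (Φ f).coeff d = f := by
    have := hev f
    rw [hΦfmono] at this
    simpa using this
  rw [hcoef] at hΦfmono
  -- f is weighted homogeneous of degree d
  have hom : ∀ m ∈ f.support, b * m 0 + a * m 1 = d := by
    intro m hm
    by_contra hne
    have h1 : MvPolynomial.coeff m ((Φ f).coeff (b * m 0 + a * m 1))
        = MvPolynomial.coeff m f := by
      conv_lhs => rw [f.as_sum, map_sum, Polynomial.finset_sum_coeff]
      rw [MvPolynomial.coeff_sum, Finset.sum_eq_single_of_mem m hm]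
      · rw [hΦmono, Polynomial.coeff_C_mul, Polynomial.coeff_X_pow, if_pos rfl, mul_one,
          MvPolynomial.coeff_monomial, if_pos rfl]
      · intro u hu hune
        rw [hΦmono, Polynomial.coeff_C_mul, Polynomial.coeff_X_pow]
        by_cases h : b * m 0 + a * m 1 = b * u 0 + a * u 1
        · rw [if_pos h, mul_one, MvPolynomial.coeff_monomial, if_neg hune]
        · rw [if_neg h, mul_zero, MvPolynomial.coeff_zero]
    rw [hΦfmono, Polynomial.coeff_C_mul, Polynomial.coeff_X_pow, if_neg hne, mul_zero,
      MvPolynomial.coeff_zero] at h1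
    exact (MvPolynomial.mem_support_iff.mp hm) h1.symm
  -- there is a monomial of f not involving x₂
  have hx2 : ∃ m ∈ f.support, m 1 = 0 := by
    by_contra hcon
    push_neg at hcon
    set ψ : MvPolynomial (Fin 2) k →ₐ[k] MvPolynomial (Fin 2) k :=
      MvPolynomial.aeval ![MvPolynomial.X 0, 0] with hψdef
    have hψf : ψ f = 0 := by
      conv_lhs => rw [f.as_sum, map_sum]
      apply Finset.sum_eq_zero
      intro m hm
      rw [monomial_eq_prod, map_mul, map_mul, map_pow, map_pow, hψdef,
        MvPolynomial.aeval_X, MvPolynomial.aeval_X]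
      have : (![MvPolynomial.X 0, (0 : MvPolynomial (Fin 2) k)]) 1 = 0 := rfl
      rw [this, zero_pow (hcon m hm), mul_zero]
    have hψg : ψ g = 0 := by rw [hg, map_mul, hψf, zero_mul]
    rw [hgdef, map_add, map_pow, map_pow, hψdef, MvPolynomial.aeval_X,
      MvPolynomial.aeval_X] at hψg
    have h0 : (![MvPolynomial.X 0, (0 : MvPolynomial (Fin 2) k)]) 0 = MvPolynomial.X 0 := rfl
    have h1 : (![MvPolynomial.X 0, (0 : MvPolynomial (Fin 2) k)]) 1 = 0 := rfl
    rw [h0, h1, zero_pow (by positivity), add_zero] at hψg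
    exact pow_ne_zero _ (MvPolynomial.X_ne_zero 0) hψg
  -- there is a monomial of f not involving x₁
  have hx1 : ∃ m ∈ f.support, m 0 = 0 := by
    by_contra hcon
    push_neg at hcon
    set ψ : MvPolynomial (Fin 2) k →ₐ[k] MvPolynomial (Fin 2) k :=
      MvPolynomial.aeval ![0, MvPolynomial.X 1] with hψdef
    have hψf : ψ f = 0 := by
      conv_lhs => rw [f.as_sum, map_sum]
      apply Finset.sum_eq_zero
      intro m hm
      rw [monomial_eq_prod, map_mul, map_mul, map_pow, map_pow, hψdef,
        MvPolynomial.aeval_X, MvPolynomial.aeval_X]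
      have : (![(0 : MvPolynomial (Fin 2) k), MvPolynomial.X 1]) 0 = 0 := rfl
      rw [this, zero_pow (hcon m hm), mul_zero, zero_mul]
    have hψg : ψ g = 0 := by rw [hg, map_mul, hψf, zero_mul]
    rw [hgdef, map_add, map_pow, map_pow, hψdef, MvPolynomial.aeval_X,
      MvPolynomial.aeval_X] at hψg
    have h0 : (![(0 : MvPolynomial (Fin 2) k), MvPolynomial.X 1]) 0 = 0 := rfl
    have h1 : (![(0 : MvPolynomial (Fin 2) k), MvPolynomial.X 1]) 1 = MvPolynomial.X 1 := rfl
    rw [h0, h1, zero_pow (by positivity), zero_add] at hψg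
    exact pow_ne_zero _ (MvPolynomial.X_ne_zero 1) hψg
  obtain ⟨m2, hm2, hm2'⟩ := hx2
  obtain ⟨m1, hm1, hm1'⟩ := hx1
  have hbd : b ∣ d := by
    have := hom m2 hm2
    rw [hm2', mul_zero, add_zero] at this
    exact this ▸ dvd_mul_right b (m2 0)
  have had : a ∣ d := by
    have := hom m1 hm1
    rw [hm1', mul_zero, zero_add] at this
    exact this ▸ dvd_mul_right a (m1 1)
  have hdiv : ∀ m ∈ f.support, a ∣ m 0 ∧ b ∣ m 1 := by
    intro m hm
    have hdm := hom m hm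
    constructor
    · have h1 : a ∣ a * m 1 + b * m 0 := by rw [add_comm, hdm]; exact had
      have h2 : a ∣ b * m 0 := (Nat.dvd_add_right (dvd_mul_right a (m 1))).mp h1
      exact hab.dvd_of_dvd_mul_left h2
    · have h1 : b ∣ b * m 0 + a * m 1 := hdm ▸ hbd
      have h2 : b ∣ a * m 1 := (Nat.dvd_add_right (dvd_mul_right b (m 0))).mp h1
      exact (Nat.Coprime.symm hab).dvd_of_dvd_mul_left h2
  -- construct q
  refine ⟨∑ m ∈ f.support, MvPolynomial.monomial
    (Finsupp.single 0 (m 0 / a) + Finsupp.single 1 (m 1 / b)) (MvPolynomial.coeff m f), ?_⟩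
  rw [map_sum]
  conv_lhs => rw [f.as_sum]
  apply Finset.sum_congr rfl
  intro m hm
  obtain ⟨hda, hdb⟩ := hdiv m hm
  rw [monomial_eq_prod (Finsupp.single 0 (m 0 / a) + Finsupp.single 1 (m 1 / b)),
    map_mul, map_mul, map_pow, map_pow, MvPolynomial.aeval_X, MvPolynomial.aeval_X,
    MvPolynomial.aeval_C]
  have e0 : ((Finsupp.single (0 : Fin 2) (m 0 / a) + Finsupp.single (1 : Fin 2) (m 1 / b)
      : Fin 2 →₀ ℕ)) 0 = m 0 / a := by simp
  have e1 : ((Finsupp.single (0 : Fin 2) (m 0 / a) + Finsupp.single (1 : Fin 2) (m 1 / b)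
      : Fin 2 →₀ ℕ)) 1 = m 1 / b := by simp
  rw [e0, e1]
  have v0 : (![(MvPolynomial.X 0 ^ a : MvPolynomial (Fin 2) k), MvPolynomial.X 1 ^ b]) 0
      = MvPolynomial.X 0 ^ a := rfl
  have v1 : (![(MvPolynomial.X 0 ^ a : MvPolynomial (Fin 2) k), MvPolynomial.X 1 ^ b]) 1
      = MvPolynomial.X 1 ^ b := rfl
  rw [v0, v1, ← pow_mul, ← pow_mul, Nat.mul_div_cancel' hda, Nat.mul_div_cancel' hdb,
    MvPolynomial.algebraMap_eq, monomial_eq_prod]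
end

section
/- Let k be a field, let a, b be positive integers with gcd(a,b) = 1, and let λ be a nonzero element of k. Then the polynomial x_1^a − λ·x_2^b is irreducible in the polynomial ring k[x_1,x_2]. -/
open Polynomial

lemma aux_poly {k : Type*} [Field k] {a b : ℕ}
    (ha : Odd a) (hb : 0 < b) (hab : Nat.Coprime a b) (lam : k) (hlam : lam ≠ 0) :
    Irreducible (X ^ a - C (C lam * X ^ b) : Polynomial (Polynomial k)) := by
  set c : Polynomial k := C lam * X ^ b with hc
  have hc0 : c ≠ 0 := mul_ne_zero (by simpa using hlam) (pow_ne_zero _ X_ne_zero)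
  have hcdeg : c.natDegree = b := by
    rw [hc, natDegree_C_mul (by simpa using hlam), natDegree_X_pow]
  have hmonic : (X ^ a - C c : Polynomial (Polynomial k)).Monic :=
    monic_X_pow_sub_C c ha.pos.ne'
  set K := FractionRing (Polynomial k)
  rw [hmonic.irreducible_iff_irreducible_map_fraction_map (K := K)]
  rw [Polynomial.map_sub, Polynomial.map_pow, map_X, map_C]
  apply X_pow_sub_C_irreducible_of_odd ha
  intro p hp hpa d hd
  -- get d = r/s
  obtain ⟨r, s, hs, hrs⟩ := IsFractionRing.div_surjective (A := Polynomial k) d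
  have hs0 : (s : Polynomial k) ≠ 0 := nonZeroDivisors.ne_zero hs
  have hsK : algebraMap (Polynomial k) K s ≠ 0 := by
    simpa using (IsFractionRing.to_map_eq_zero_iff (K := K)).not.mpr hs0
  have hrs' : algebraMap (Polynomial k) K r = d * algebraMap (Polynomial k) K s := by
    rw [← hrs, div_mul_cancel₀ _ hsK]
  have key2 : r ^ p = c * s ^ p := by
    apply IsFractionRing.injective (Polynomial k) K
    rw [map_pow, hrs', mul_pow, hd]
    simp [hc, mul_pow]
  have hr0 : r ≠ 0 := by
    intro h
    rw [h, zero_pow hp.ne_zero] at key2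
    exact (mul_ne_zero hc0 (pow_ne_zero _ hs0)) key2.symm
  have hdeg := congrArg natDegree key2
  rw [natDegree_pow, natDegree_mul hc0 (pow_ne_zero _ hs0), natDegree_pow, hcdeg] at hdeg
  have hpb : p ∣ b := by
    have h1 : b = p * r.natDegree - p * s.natDegree := by omega
    rw [h1]
    exact Nat.dvd_sub (Dvd.intro _ rfl) (Dvd.intro _ rfl)
  exact hp.one_lt.ne' (Nat.eq_one_of_dvd_coprimes hab hpa hpb)

lemma aux_mv {k : Type*} [Field k] {a b : ℕ}
    (ha : Odd a) (hb : 0 < b) (hab : Nat.Coprime a b) (lam : k) (hlam : lam ≠ 0) :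
    Irreducible (MvPolynomial.X 0 ^ a - MvPolynomial.C lam * MvPolynomial.X 1 ^ b :
      MvPolynomial (Fin 2) k) := by
  let e : MvPolynomial (Fin 2) k ≃ₐ[k] Polynomial (Polynomial k) :=
    (MvPolynomial.finSuccEquiv k 1).trans <| Polynomial.mapAlgEquiv <|
      (MvPolynomial.finSuccEquiv k 0).trans <|
        Polynomial.mapAlgEquiv (MvPolynomial.isEmptyAlgEquiv k (Fin 0))
  have h1 : e (MvPolynomial.X 0) = Polynomial.X := by
    simp only [e, AlgEquiv.trans_apply, MvPolynomial.finSuccEquiv_X_zero,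
      Polynomial.coe_mapAlgEquiv, Polynomial.map_X]
  have h2 : e (MvPolynomial.X 1) = Polynomial.C Polynomial.X := by
    have h : (1 : Fin 2) = Fin.succ 0 := rfl
    rw [h]
    simp only [e, AlgEquiv.trans_apply, MvPolynomial.finSuccEquiv_X_succ,
      Polynomial.coe_mapAlgEquiv, Polynomial.map_C]
    simp [MvPolynomial.finSuccEquiv_X_zero]
  have h3 : e (MvPolynomial.C lam) = Polynomial.C (Polynomial.C lam) := by
    have h : (MvPolynomial.C lam : MvPolynomial (Fin 2) k) = algebraMap k _ lam := rfl
    rw [h, AlgEquiv.commutes]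
    rfl
  have he : e (MvPolynomial.X 0 ^ a - MvPolynomial.C lam * MvPolynomial.X 1 ^ b) =
      (X ^ a - C (C lam * X ^ b) : Polynomial (Polynomial k)) := by
    rw [map_sub, map_pow, map_mul, map_pow, h1, h2, h3, ← C_pow, ← C_mul]
  exact (MulEquiv.irreducible_iff (e : MvPolynomial (Fin 2) k ≃* Polynomial (Polynomial k))).mp
    (by rw [show (e : MvPolynomial (Fin 2) k ≃* Polynomial (Polynomial k)) _ = e _ from rfl, he]
        exact aux_poly ha hb hab lam hlam)



/-- Let `k` be a field, `a, b` positive integers with `gcd(a,b) = 1`, and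
`λ` a nonzero element of `k`.  Then `x₁^a − λ·x₂^b` is irreducible in `k[x₁,x₂]`, realized as
`MvPolynomial (Fin 2) k`. -/
theorem divisor_class_stmt_12 {k : Type*} [Field k] {a b : ℕ}
    (ha : 0 < a) (hb : 0 < b) (hab : Nat.Coprime a b) (lam : k) (hlam : lam ≠ 0) :
    Irreducible (MvPolynomial.X 0 ^ a - MvPolynomial.C lam * MvPolynomial.X 1 ^ b :
      MvPolynomial (Fin 2) k) := by
  rcases Nat.even_or_odd a with hae | hao
  · -- then b is odd
    have hbo : Odd b := by
      rcases Nat.even_or_odd b with hbe | hbo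
      · exfalso
        have : 2 ∣ Nat.gcd a b := Nat.dvd_gcd hae.two_dvd hbe.two_dvd
        rw [hab] at this
        omega
      · exact hbo
    have hQ := aux_mv (k := k) hbo ha hab.symm lam⁻¹ (inv_ne_zero hlam)
    let σ := MvPolynomial.renameEquiv k (Equiv.swap (0 : Fin 2) 1)
    have hQ' : Irreducible (σ (MvPolynomial.X 0 ^ b - MvPolynomial.C lam⁻¹ *
        MvPolynomial.X 1 ^ a)) :=
      (MulEquiv.irreducible_iff (σ : MvPolynomial (Fin 2) k ≃* MvPolynomial (Fin 2) k)).mpr hQ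
    have hσ : σ (MvPolynomial.X 0 ^ b - MvPolynomial.C lam⁻¹ * MvPolynomial.X 1 ^ a) =
        MvPolynomial.X 1 ^ b - MvPolynomial.C lam⁻¹ * MvPolynomial.X 0 ^ a := by
      simp [σ, Equiv.swap_apply_left, Equiv.swap_apply_right]
    rw [hσ] at hQ'
    have hu : IsUnit (MvPolynomial.C (-lam) : MvPolynomial (Fin 2) k) :=
      (isUnit_iff_ne_zero.mpr (neg_ne_zero.mpr hlam)).map MvPolynomial.C
    have hP : (MvPolynomial.X 0 ^ a - MvPolynomial.C lam * MvPolynomial.X 1 ^ b :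
        MvPolynomial (Fin 2) k) = MvPolynomial.C (-lam) *
        (MvPolynomial.X 1 ^ b - MvPolynomial.C lam⁻¹ * MvPolynomial.X 0 ^ a) := by
      rw [map_neg, neg_mul, mul_sub, ← mul_assoc, ← map_mul, mul_inv_cancel₀ hlam, map_one,
        one_mul, neg_sub]
    rw [hP]
    exact ((associated_unit_mul_left _ _ hu).symm).irreducible hQ'
  · exact aux_mv hao hb hab lam hlam
end

section
/- Let k be an algebraically closed field, let a, b, c be positive integers with gcd(a,b) = 1, and suppose the characteristic of k is zero or does not divide c. Then the polynomial x_1^{ac} + x_2^{bc} is a product of exactly c irreducible polynomials in k[x_1,x_2], and these c irreducible factors are pairwise non-associated; explicitly, x_1^{ac} + x_2^{bc} = ∏_ζ (x_1^a − ζ·x_2^b), the product ranging over the c distinct roots ζ of t^c = −1 in k. -/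
open scoped Classical

open Polynomial in
private lemma dc13_ntd_pow {R : Type*} [CommRing R] [IsDomain R] {f : R[X]} (hf : f ≠ 0) (n : ℕ) :
    (f ^ n).natTrailingDegree = n * f.natTrailingDegree := by
  induction n with
  | zero => simp
  | succ n ih =>
    rw [pow_succ, natTrailingDegree_mul (pow_ne_zero n hf) hf, ih]
    ring

open Polynomial in
private lemma dc13_irr_aux {k : Type*} [Field k] {a b : ℕ} (ha : 0 < a) (hodd : Odd a)
    (hab : Nat.Coprime a b) {z : k} (hz : z ≠ 0) :
    Irreducible (X ^ a - C (Polynomial.C z * X ^ b) : (Polynomial k)[X]) := by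
  set r : Polynomial k := Polynomial.C z * X ^ b with hr
  have hmonic : (X ^ a - C r).Monic := monic_X_pow_sub_C r ha.ne'
  rw [hmonic.irreducible_iff_irreducible_map_fraction_map (K := FractionRing (Polynomial k))]
  rw [Polynomial.map_sub, Polynomial.map_pow, map_X, map_C]
  apply X_pow_sub_C_irreducible_of_odd hodd
  intro p hp hpa β hβ
  obtain ⟨f, g, hg, rfl⟩ := IsFractionRing.div_surjective (A := Polynomial k) β
  have hg0 : g ≠ 0 := nonZeroDivisors.ne_zero hg
  have hginj := IsFractionRing.injective (Polynomial k) (FractionRing (Polynomial k))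
  have hgK : algebraMap (Polynomial k) (FractionRing (Polynomial k)) g ≠ 0 := by
    simpa using fun h => hg0 (hginj (by simpa using h))
  rw [div_pow, div_eq_iff (pow_ne_zero _ hgK), ← map_pow, ← map_pow, ← map_mul] at hβ
  have key : f ^ p = r * g ^ p := hginj hβ
  have hf0 : f ≠ 0 := by
    rintro rfl
    rw [zero_pow hp.ne_zero] at key
    exact (mul_ne_zero
      (mul_ne_zero (Polynomial.C_ne_zero.mpr hz) (pow_ne_zero _ X_ne_zero))
      (pow_ne_zero _ hg0)) key.symm
  have hkey := congrArg Polynomial.natTrailingDegree key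
  rw [dc13_ntd_pow hf0, hr, natTrailingDegree_mul
      (mul_ne_zero (Polynomial.C_ne_zero.mpr hz) (pow_ne_zero _ X_ne_zero)) (pow_ne_zero _ hg0),
    dc13_ntd_pow hg0, natTrailingDegree_mul (Polynomial.C_ne_zero.mpr hz) (pow_ne_zero _ X_ne_zero),
    natTrailingDegree_C, natTrailingDegree_X_pow, zero_add] at hkey
  have hpb : p ∣ b := by
    have h1 : p ∣ p * f.natTrailingDegree := dvd_mul_right _ _
    rw [hkey, add_comm] at h1
    exact (Nat.dvd_add_right (dvd_mul_right _ _)).mp h1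
  have : p ∣ Nat.gcd a b := Nat.dvd_gcd hpa hpb
  rw [hab] at this
  exact hp.ne_one (Nat.dvd_one.mp this)

/-- The algebra equivalence `k[x₀,x₁] ≃ k[y][x]` sending `X 0` to `X` and `X 1` to `C X`. -/
noncomputable def dc13E (k : Type*) [CommSemiring k] :
    MvPolynomial (Fin 2) k ≃ₐ[k] Polynomial (Polynomial k) :=
  (MvPolynomial.finSuccEquiv k 1).trans <| Polynomial.mapAlgEquiv <|
    (MvPolynomial.finSuccEquiv k 0).trans <| Polynomial.mapAlgEquiv <|
      MvPolynomial.isEmptyAlgEquiv k (Fin 0)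

private lemma dc13E_X0 (k : Type*) [CommSemiring k] :
    dc13E k (MvPolynomial.X 0) = Polynomial.X := by
  simp only [dc13E, AlgEquiv.trans_apply, MvPolynomial.finSuccEquiv_X_zero,
    Polynomial.coe_mapAlgEquiv]
  simp

private lemma dc13E_X1 (k : Type*) [CommSemiring k] :
    dc13E k (MvPolynomial.X 1) = Polynomial.C Polynomial.X := by
  rw [show (1 : Fin 2) = Fin.succ 0 from rfl]
  simp only [dc13E, AlgEquiv.trans_apply, MvPolynomial.finSuccEquiv_X_succ,
    Polynomial.coe_mapAlgEquiv, Polynomial.map_C, RingHom.coe_coe, AlgEquiv.trans_apply]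
  rw [MvPolynomial.finSuccEquiv_X_zero]
  simp

private lemma dc13E_p {k : Type*} [CommRing k] (a b : ℕ) (z : k) :
    dc13E k (MvPolynomial.X 0 ^ a - MvPolynomial.C z * MvPolynomial.X 1 ^ b) =
      Polynomial.X ^ a - Polynomial.C (Polynomial.C z * Polynomial.X ^ b) := by
  have hC : dc13E k (MvPolynomial.C z) = Polynomial.C (Polynomial.C z) := by
    have := (dc13E k).commutes z
    simpa [Polynomial.algebraMap_apply, MvPolynomial.algebraMap_eq] using this
  rw [map_sub, map_pow, map_mul, map_pow, dc13E_X0, dc13E_X1, hC, map_mul, ← Polynomial.C_pow]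

private lemma dc13_irr_mv_odd {k : Type*} [Field k] {a b : ℕ} (ha : 0 < a) (hodd : Odd a)
    (hab : Nat.Coprime a b) {z : k} (hz : z ≠ 0) :
    Irreducible (MvPolynomial.X 0 ^ a - MvPolynomial.C z * MvPolynomial.X 1 ^ b :
      MvPolynomial (Fin 2) k) := by
  rw [← MulEquiv.irreducible_iff (dc13E k), dc13E_p]
  exact dc13_irr_aux ha hodd hab hz

private lemma dc13_irr_mv {k : Type*} [Field k] {a b : ℕ} (ha : 0 < a) (hb : 0 < b)
    (hab : Nat.Coprime a b) {z : k} (hz : z ≠ 0) :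
    Irreducible (MvPolynomial.X 0 ^ a - MvPolynomial.C z * MvPolynomial.X 1 ^ b :
      MvPolynomial (Fin 2) k) := by
  rcases Nat.even_or_odd a with hae | h
  case inr => exact dc13_irr_mv_odd ha h hab hz
  · have h : Odd b := by
      rcases Nat.even_or_odd b with hbe | h
      · exfalso
        have h2 : 2 ∣ Nat.gcd a b := Nat.dvd_gcd hae.two_dvd hbe.two_dvd
        rw [hab] at h2
        omega
      · exact h
    have h1 : Irreducible (MvPolynomial.X 0 ^ b - MvPolynomial.C z⁻¹ * MvPolynomial.X 1 ^ a :
        MvPolynomial (Fin 2) k) := dc13_irr_mv_odd hb h hab.symm (inv_ne_zero hz)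
    have h2 := (MulEquiv.irreducible_iff
      (MvPolynomial.renameEquiv k (Equiv.swap (0 : Fin 2) 1))).mpr h1
    have h3 : (MvPolynomial.renameEquiv k (Equiv.swap (0 : Fin 2) 1))
        (MvPolynomial.X 0 ^ b - MvPolynomial.C z⁻¹ * MvPolynomial.X 1 ^ a) =
        MvPolynomial.X 1 ^ b - MvPolynomial.C z⁻¹ * MvPolynomial.X 0 ^ a := by
      simp [Equiv.swap_apply_left, Equiv.swap_apply_right]
    rw [h3] at h2
    have hu : IsUnit (-(MvPolynomial.C z : MvPolynomial (Fin 2) k)) :=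
      ((hz.isUnit.map (MvPolynomial.C : k →+* MvPolynomial (Fin 2) k))).neg
    have h4 := (irreducible_isUnit_mul hu).mpr h2
    have h5 : (-(MvPolynomial.C z : MvPolynomial (Fin 2) k)) *
        (MvPolynomial.X 1 ^ b - MvPolynomial.C z⁻¹ * MvPolynomial.X 0 ^ a) =
        MvPolynomial.X 0 ^ a - MvPolynomial.C z * MvPolynomial.X 1 ^ b := by
      rw [neg_mul, mul_sub, ← mul_assoc, ← map_mul, mul_inv_cancel₀ hz, map_one, one_mul]
      ring
    rwa [h5] at h4

set_option maxHeartbeats 1000000 in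
set_option synthInstance.maxHeartbeats 200000 in
/-- Let `k` be an algebraically closed field, `a, b, c` positive integers
with `gcd(a,b) = 1`, and suppose the characteristic of `k` is zero or does not divide `c`
(equivalently, `c` is nonzero in `k`).  Then `x₁^{ac} + x₂^{bc}` is a product of exactly `c`
irreducible polynomials in `k[x₁,x₂]`, pairwise non-associated; explicitly
`x₁^{ac} + x₂^{bc} = ∏_ζ (x₁^a − ζ·x₂^b)`, the product over the `c` distinct roots `ζ` of
`t^c = −1` in `k`.  Here `k[x₁,x₂]` is realized as `MvPolynomial (Fin 2) k` and the set of
roots of `t^c = −1` as `(Polynomial.nthRoots c (-1 : k)).toFinset`. -/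
theorem divisor_class_stmt_13 {k : Type*} [Field k] [IsAlgClosed k] {a b c : ℕ}
    (ha : 0 < a) (hb : 0 < b) (hc : 0 < c) (hab : Nat.Coprime a b) (hck : (c : k) ≠ 0) :
    (Polynomial.nthRoots c (-1 : k)).toFinset.card = c ∧
    (∀ ζ ∈ (Polynomial.nthRoots c (-1 : k)).toFinset,
      Irreducible (MvPolynomial.X 0 ^ a - MvPolynomial.C ζ * MvPolynomial.X 1 ^ b :
        MvPolynomial (Fin 2) k)) ∧
    (∀ ζ ∈ (Polynomial.nthRoots c (-1 : k)).toFinset,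
      ∀ ξ ∈ (Polynomial.nthRoots c (-1 : k)).toFinset, ζ ≠ ξ →
        ¬ Associated
          (MvPolynomial.X 0 ^ a - MvPolynomial.C ζ * MvPolynomial.X 1 ^ b :
            MvPolynomial (Fin 2) k)
          (MvPolynomial.X 0 ^ a - MvPolynomial.C ξ * MvPolynomial.X 1 ^ b)) ∧
    (MvPolynomial.X 0 ^ (a * c) + MvPolynomial.X 1 ^ (b * c) : MvPolynomial (Fin 2) k) =
      ∏ ζ ∈ (Polynomial.nthRoots c (-1 : k)).toFinset,
        (MvPolynomial.X 0 ^ a - MvPolynomial.C ζ * MvPolynomial.X 1 ^ b) := by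
  have : NeZero ((c : k)) := ⟨hck⟩
  obtain ⟨ζ₀, hζ₀⟩ := HasEnoughRootsOfUnity.exists_primitiveRoot k c
  have hm1 : (-1 : k) ≠ 0 := by simp
  have hnodup : (Polynomial.nthRoots c (-1 : k)).Nodup := hζ₀.nthRoots_nodup hm1
  have hmcard : Multiset.card (Polynomial.nthRoots c (-1 : k)) = c := by
    rw [hζ₀.card_nthRoots]
    exact if_pos (IsAlgClosed.exists_pow_nat_eq (-1 : k) hc)
  set S := (Polynomial.nthRoots c (-1 : k)).toFinset with hS
  have hScard : S.card = c := by
    rw [hS, Multiset.toFinset_card_of_nodup hnodup, hmcard]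
  have hmem : ∀ ζ ∈ S, ζ ^ c = -1 := by
    intro ζ hζ
    rw [hS, Multiset.mem_toFinset, Polynomial.mem_nthRoots hc] at hζ
    exact hζ
  have hne0 : ∀ ζ ∈ S, ζ ≠ 0 := by
    intro ζ hζ h0
    have := hmem ζ hζ
    rw [h0, zero_pow hc.ne'] at this
    exact hm1 this.symm
  refine ⟨hScard, ?_, ?_, ?_⟩
  · intro ζ hζ
    exact dc13_irr_mv ha hb hab (hne0 ζ hζ)
  · intro ζ hζ ξ hξ hne hassoc
    have h2 := hassoc.map (dc13E k)
    rw [dc13E_p, dc13E_p] at h2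
    have hmon : ∀ w : k, (Polynomial.X ^ a -
        Polynomial.C (Polynomial.C w * Polynomial.X ^ b) :
        Polynomial (Polynomial k)).Monic := fun w => Polynomial.monic_X_pow_sub_C _ ha.ne'
    have heq := Polynomial.eq_of_monic_of_associated (hmon ζ) (hmon ξ) h2
    have heq2 : (Polynomial.C ζ * Polynomial.X ^ b : Polynomial k) =
        Polynomial.C ξ * Polynomial.X ^ b := by
      rw [sub_right_inj] at heq
      exact Polynomial.C_injective heq
    have := mul_right_cancel₀ (pow_ne_zero b Polynomial.X_ne_zero) heq2
    exact hne (Polynomial.C_injective this)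
  · -- the product formula
    have hXc : (Polynomial.X ^ c - Polynomial.C (-1 : k)) =
        ((Polynomial.nthRoots c (-1 : k)).map fun ζ => Polynomial.X - Polynomial.C ζ).prod := by
      have := Polynomial.Splits.eq_prod_roots_of_monic
        (IsAlgClosed.splits _)
        (Polynomial.monic_X_pow_sub_C (-1 : k) hc.ne')
      simpa [Polynomial.nthRoots] using this
    have hSprod : ∏ ζ ∈ S, (Polynomial.X - Polynomial.C ζ) =
        Polynomial.X ^ c - Polynomial.C (-1 : k) := by
      rw [hXc, Finset.prod]
      congr 1
      rw [hS, Multiset.toFinset_val, hnodup.dedup]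
    -- move to the fraction field
    have hinj := IsFractionRing.injective (MvPolynomial (Fin 2) k)
      (FractionRing (MvPolynomial (Fin 2) k))
    apply hinj
    set K := FractionRing (MvPolynomial (Fin 2) k) with hK
    set φ := algebraMap (MvPolynomial (Fin 2) k) K with hφ
    set u : K := φ (MvPolynomial.X 0) ^ a with hu
    set v : K := φ (MvPolynomial.X 1) ^ b with hv
    have hv0 : v ≠ 0 := by
      apply pow_ne_zero
      intro h
      have : (MvPolynomial.X 1 : MvPolynomial (Fin 2) k) = 0 :=
        hinj (by rw [map_zero]; exact h)
      exact MvPolynomial.X_ne_zero 1 this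
    have hCmap : ∀ w : k, φ (MvPolynomial.C w) = algebraMap k K w := by
      intro w
      rw [← MvPolynomial.algebraMap_eq, hφ, ← IsScalarTower.algebraMap_apply]
    rw [map_add, map_prod, map_pow, map_pow]
    have hfactor : ∀ ζ, φ (MvPolynomial.X 0 ^ a - MvPolynomial.C ζ * MvPolynomial.X 1 ^ b)
        = u - algebraMap k K ζ * v := by
      intro ζ
      rw [map_sub, map_pow, map_mul, map_pow, hCmap, ← hu, ← hv]
    calc φ (MvPolynomial.X 0) ^ (a * c) + φ (MvPolynomial.X 1) ^ (b * c)
        = u ^ c + v ^ c := by rw [hu, hv, ← pow_mul, ← pow_mul]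
      _ = ((u / v) ^ c + 1) * v ^ c := by
          rw [add_mul, div_pow, div_mul_cancel₀ _ (pow_ne_zero _ hv0), one_mul]
      _ = (Polynomial.aeval (u / v) (Polynomial.X ^ c - Polynomial.C (-1 : k))) * v ^ c := by
          rw [map_sub, map_pow, Polynomial.aeval_X, Polynomial.aeval_C, map_neg, map_one]
          ring
      _ = (∏ ζ ∈ S, (u / v - algebraMap k K ζ)) * v ^ c := by
          rw [← hSprod, map_prod]
          simp only [map_sub, Polynomial.aeval_X, Polynomial.aeval_C]
      _ = ∏ ζ ∈ S, ((u / v - algebraMap k K ζ) * v) := by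
          rw [Finset.prod_mul_distrib, Finset.prod_const, hScard]
      _ = ∏ ζ ∈ S, (u - algebraMap k K ζ * v) := by
          apply Finset.prod_congr rfl
          intro ζ _
          rw [sub_mul, div_mul_cancel₀ _ hv0]
      _ = ∏ ζ ∈ S, φ (MvPolynomial.X 0 ^ a - MvPolynomial.C ζ * MvPolynomial.X 1 ^ b) := by
          exact Finset.prod_congr rfl fun ζ _ => (hfactor ζ).symm
end

section
/- The hypersurface ring ℂ[z,x_1,x_2,x_3]/(z^3 − x_1^3 − x_2^3 − x_3^3) is not a unique factorization domain. -/
open MvPolynomial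

noncomputable section DivisorClassAux

abbrev Apoly : Type := MvPolynomial (Fin 4) ℂ

abbrev fcubic : Apoly := X 0 ^ 3 - X 1 ^ 3 - X 2 ^ 3 - X 3 ^ 3

abbrev Icubic : Ideal Apoly := Ideal.span {fcubic}

abbrev Rcubic : Type := Apoly ⧸ Icubic

abbrev qmk : Apoly →+* Rcubic := Ideal.Quotient.mk Icubic

lemma fcubic_hom : fcubic.IsHomogeneous 3 := by
  have h : ∀ i : Fin 4, ((X i : Apoly) ^ 3).IsHomogeneous 3 := by
    intro i
    simpa using (isHomogeneous_X ℂ i).pow 3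
  exact (((h 0).sub (h 1)).sub (h 2)).sub (h 3)

lemma hcomp_mem {p : Apoly} (hp : p ∈ Icubic) (n : ℕ) :
    MvPolynomial.homogeneousComponent n p ∈ Icubic := by
  obtain ⟨k, hk⟩ := Ideal.mem_span_singleton.mp hp
  subst hk
  have hfk : fcubic * k
      = ∑ j ∈ Finset.range (k.totalDegree + 1), fcubic * homogeneousComponent j k := by
    rw [← Finset.mul_sum, sum_homogeneousComponent]
  rw [hfk, map_sum]
  apply Ideal.sum_mem
  intro j _
  rw [homogeneousComponent_of_mem ((mem_homogeneousSubmodule _ _).2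
    (fcubic_hom.mul (homogeneousComponent_isHomogeneous j k)))]
  split_ifs
  · exact Ideal.mem_span_singleton.mpr (dvd_mul_right _ _)
  · exact zero_mem _

lemma qmk_hcomp {p q : Apoly} (h : qmk p = qmk q) (n : ℕ) :
    qmk (homogeneousComponent n p) = qmk (homogeneousComponent n q) := by
  have hm : p - q ∈ Icubic := Ideal.Quotient.eq.mp h
  refine Ideal.Quotient.eq.mpr ?_
  rw [← map_sub]
  exact hcomp_mem hm n

lemma hcomp_mul (a b : Apoly) (k : ℕ) :
    qmk (homogeneousComponent k (a * b))
      = ∑ i ∈ Finset.range (a.totalDegree + 1), ∑ j ∈ Finset.range (b.totalDegree + 1),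
          if i + j = k then qmk (homogeneousComponent i a) * qmk (homogeneousComponent j b)
          else 0 := by
  have hab : a * b = ∑ i ∈ Finset.range (a.totalDegree + 1),
      ∑ j ∈ Finset.range (b.totalDegree + 1),
        homogeneousComponent i a * homogeneousComponent j b := by
    rw [← Finset.sum_mul_sum, sum_homogeneousComponent, sum_homogeneousComponent]
  rw [hab, map_sum, map_sum]
  refine Finset.sum_congr rfl fun i _ => ?_
  rw [map_sum, map_sum]
  refine Finset.sum_congr rfl fun j _ => ?_
  rw [homogeneousComponent_of_mem ((mem_homogeneousSubmodule _ _).2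
    ((homogeneousComponent_isHomogeneous i a).mul (homogeneousComponent_isHomogeneous j b)))]
  by_cases h : i + j = k
  · rw [if_pos h.symm, if_pos h, map_mul]
  · rw [if_neg (fun hh => h hh.symm), if_neg h, map_zero]

lemma exists_max {a : Apoly} (ha : qmk a ≠ 0) :
    ∃ m, qmk (homogeneousComponent m a) ≠ 0 ∧
      ∀ i, m < i → qmk (homogeneousComponent i a) = 0 := by
  classical
  set S := (Finset.range (a.totalDegree + 1)).filter
    (fun i => qmk (homogeneousComponent i a) ≠ 0) with hSdef
  have hne : S.Nonempty := by
    by_contra h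
    rw [Finset.not_nonempty_iff_eq_empty] at h
    apply ha
    have h1 : qmk a = ∑ i ∈ Finset.range (a.totalDegree + 1),
        qmk (homogeneousComponent i a) := by
      conv_lhs => rw [← sum_homogeneousComponent a]
      rw [map_sum]
    rw [h1]
    apply Finset.sum_eq_zero
    intro i hi
    by_contra hz
    exact Finset.notMem_empty i (h ▸ Finset.mem_filter.mpr ⟨hi, hz⟩)
  refine ⟨S.max' hne, (Finset.mem_filter.mp (S.max'_mem hne)).2, fun i hi => ?_⟩
  by_contra hz
  have hile : i ≤ a.totalDegree := by
    by_contra hgt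
    exact hz (by rw [homogeneousComponent_eq_zero _ _ (by omega), map_zero])
  have hiS : i ∈ S := Finset.mem_filter.mpr ⟨Finset.mem_range.mpr (by omega), hz⟩
  exact absurd (Finset.le_max' S i hiS) (by omega)

lemma top_mul {a b : Apoly} {m n : ℕ}
    (hm : qmk (homogeneousComponent m a) ≠ 0)
    (hn : qmk (homogeneousComponent n b) ≠ 0)
    (hma : ∀ i, m < i → qmk (homogeneousComponent i a) = 0)
    (hnb : ∀ j, n < j → qmk (homogeneousComponent j b) = 0) :
    qmk (homogeneousComponent (m + n) (a * b))
      = qmk (homogeneousComponent m a) * qmk (homogeneousComponent n b) := by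
  have hmr : m ∈ Finset.range (a.totalDegree + 1) := by
    rw [Finset.mem_range]
    by_contra h
    exact hm (by rw [homogeneousComponent_eq_zero _ _ (by omega), map_zero])
  have hnr : n ∈ Finset.range (b.totalDegree + 1) := by
    rw [Finset.mem_range]
    by_contra h
    exact hn (by rw [homogeneousComponent_eq_zero _ _ (by omega), map_zero])
  rw [hcomp_mul]
  rw [Finset.sum_eq_single_of_mem m hmr ?_]
  · rw [Finset.sum_eq_single_of_mem n hnr ?_]
    · rw [if_pos rfl]
    · intro j _ hj
      rw [if_neg (by omega)]
  · intro i _ hi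
    apply Finset.sum_eq_zero
    intro j _
    split_ifs with h
    · rcases lt_or_gt_of_ne hi with h1 | h2
      · rw [hnb j (by omega), mul_zero]
      · rw [hma i h2, zero_mul]
    · rfl

lemma x23_comp (k : ℕ) :
    homogeneousComponent k (X 2 + X 3 : Apoly) = if k = 1 then X 2 + X 3 else 0 :=
  homogeneousComponent_of_mem ((mem_homogeneousSubmodule _ _).2
    ((isHomogeneous_X ℂ 2).add (isHomogeneous_X ℂ 3)))

lemma qmk_x23_ne : qmk (X 2 + X 3 : Apoly) ≠ 0 := by
  intro h
  rw [Ideal.Quotient.eq_zero_iff_mem, Ideal.mem_span_singleton] at h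
  obtain ⟨k, hk⟩ := h
  have h2 := congrArg (eval ![1, 0, 1, 0]) hk
  simp at h2

lemma qmk_C_unit {c : ℂ} (hc : c ≠ 0) : IsUnit (qmk (C c)) := by
  refine IsUnit.of_mul_eq_one (qmk (C c⁻¹)) ?_
  rw [← map_mul, ← C_mul, mul_inv_cancel₀ hc, C_1, map_one]

lemma factor_units [IsDomain Rcubic] {r s : Rcubic}
    (h : r * s = qmk (X 2 + X 3 : Apoly)) : IsUnit r ∨ IsUnit s := by
  obtain ⟨a, rfl⟩ := Ideal.Quotient.mk_surjective r
  obtain ⟨b, rfl⟩ := Ideal.Quotient.mk_surjective s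
  have ha : qmk a ≠ 0 := by
    intro h0
    exact qmk_x23_ne (by rw [← h]; show qmk a * _ = 0; rw [h0, zero_mul])
  have hb : qmk b ≠ 0 := by
    intro h0
    exact qmk_x23_ne (by rw [← h]; show _ * qmk b = 0; rw [h0, mul_zero])
  obtain ⟨m, hm, hma⟩ := exists_max ha
  obtain ⟨n, hn, hnb⟩ := exists_max hb
  have hprod : qmk (a * b) = qmk (X 2 + X 3 : Apoly) := by rw [map_mul]; exact h
  have htop : qmk (homogeneousComponent (m + n) (a * b))
      = qmk (homogeneousComponent m a) * qmk (homogeneousComponent n b) :=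
    top_mul hm hn hma hnb
  have hne : qmk (homogeneousComponent (m + n) (a * b)) ≠ 0 := by
    rw [htop]; exact mul_ne_zero hm hn
  have h1 : m + n = 1 := by
    by_contra hmn
    apply hne
    rw [qmk_hcomp hprod (m + n), x23_comp, if_neg hmn, map_zero]
  -- one of m, n is 0
  have hcases : m = 0 ∨ n = 0 := by omega
  rcases hcases with h0 | h0
  · left
    subst h0
    have heq : qmk a = qmk (homogeneousComponent 0 a) := by
      conv_lhs => rw [← sum_homogeneousComponent a, map_sum]
      exact Finset.sum_eq_single_of_mem 0 (Finset.mem_range.mpr (by omega))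
        (fun i _ hi => hma i (by omega))
    rw [homogeneousComponent_zero] at heq
    rw [heq]
    exact qmk_C_unit (fun h0 => ha (by rw [heq, h0, map_zero, map_zero]))
  · right
    subst h0
    have heq : qmk b = qmk (homogeneousComponent 0 b) := by
      conv_lhs => rw [← sum_homogeneousComponent b, map_sum]
      exact Finset.sum_eq_single_of_mem 0 (Finset.mem_range.mpr (by omega))
        (fun i _ hi => hnb i (by omega))
    rw [homogeneousComponent_zero] at heq
    rw [heq]
    exact qmk_C_unit (fun h0 => hb (by rw [heq, h0, map_zero, map_zero]))

lemma x23_not_unit [IsDomain Rcubic] : ¬ IsUnit (qmk (X 2 + X 3 : Apoly)) := by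
  intro h
  obtain ⟨s, hs⟩ := h.exists_right_inv
  obtain ⟨b, rfl⟩ := Ideal.Quotient.mk_surjective s
  have hb : qmk b ≠ 0 := by
    intro h0
    rw [show (Ideal.Quotient.mk Icubic b) = qmk b from rfl, h0, mul_zero] at hs
    exact zero_ne_one hs
  obtain ⟨n, hn, hnb⟩ := exists_max hb
  have hm : qmk (homogeneousComponent 1 (X 2 + X 3 : Apoly)) ≠ 0 := by
    rw [x23_comp, if_pos rfl]; exact qmk_x23_ne
  have hma : ∀ i, 1 < i → qmk (homogeneousComponent i (X 2 + X 3 : Apoly)) = 0 := by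
    intro i hi
    rw [x23_comp, if_neg (by omega), map_zero]
  have htop := top_mul hm hn hma hnb
  have hprod : qmk ((X 2 + X 3 : Apoly) * b) = qmk 1 := by
    rw [map_mul, map_one]; exact hs
  have hone : homogeneousComponent (1 + n) (1 : Apoly) = 0 := by
    rw [homogeneousComponent_of_mem ((mem_homogeneousSubmodule _ _).2
      (isHomogeneous_one (Fin 4) ℂ)), if_neg (by omega)]
  have := qmk_hcomp hprod (1 + n)
  rw [htop, hone, map_zero] at this
  exact mul_ne_zero hm hn this

lemma x23_irred [IsDomain Rcubic] : Irreducible (qmk (X 2 + X 3 : Apoly)) :=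
  ⟨x23_not_unit, fun _ _ h => factor_units h.symm⟩

lemma not_dvd {c d : ℂ} (hd : d ^ 3 = 1) (hne : d ≠ c) :
    ¬ qmk (X 2 + X 3 : Apoly) ∣ qmk (X 0 - C c * X 1 : Apoly) := by
  rintro ⟨t, ht⟩
  obtain ⟨b, rfl⟩ := Ideal.Quotient.mk_surjective t
  rw [show (Ideal.Quotient.mk Icubic b) = qmk b from rfl, ← map_mul] at ht
  obtain ⟨k, hk⟩ := Ideal.mem_span_singleton.mp (Ideal.Quotient.eq.mp ht)
  have h2 := congrArg (eval ![d, 1, 0, 0]) hk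
  simp [hd] at h2
  exact hne (by linear_combination h2)

end DivisorClassAux

/-- The hypersurface ring `ℂ[z,x₁,x₂,x₃]/(z³ − x₁³ − x₂³ − x₃³)` is not a
unique factorization domain, i.e. it is not an integral domain with unique factorization.
Here the polynomial ring in the four variables `z, x₁, x₂, x₃` is realized as
`MvPolynomial (Fin 4) ℂ`, with `z` the variable of index `0`. -/
theorem divisor_class_stmt_17 :
    ¬ ∃ hdom : IsDomain (MvPolynomial (Fin 4) ℂ ⧸
        Ideal.span {(MvPolynomial.X 0 ^ 3 - MvPolynomial.X 1 ^ 3 - MvPolynomial.X 2 ^ 3 -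
          MvPolynomial.X 3 ^ 3 : MvPolynomial (Fin 4) ℂ)}),
      letI := hdom
      UniqueFactorizationMonoid (MvPolynomial (Fin 4) ℂ ⧸
        Ideal.span {(MvPolynomial.X 0 ^ 3 - MvPolynomial.X 1 ^ 3 - MvPolynomial.X 2 ^ 3 -
          MvPolynomial.X 3 ^ 3 : MvPolynomial (Fin 4) ℂ)}) := by
  rintro ⟨hdom, hufm⟩
  letI : IsDomain Rcubic := hdom
  haveI hufm' : UniqueFactorizationMonoid Rcubic := hufm
  -- a primitive cube root of unity
  obtain ⟨s, hs⟩ : ∃ s : ℂ, s ^ 2 = -3 :=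
    ⟨Complex.I * Real.sqrt 3, by
      rw [mul_pow, Complex.I_sq, ← Complex.ofReal_pow, Real.sq_sqrt (by norm_num)]
      norm_num⟩
  obtain ⟨ω, hω2⟩ : ∃ ω : ℂ, ω ^ 2 + ω + 1 = 0 := ⟨(-1 + s) / 2, by linear_combination hs / 4⟩
  have hω3 : ω ^ 3 = 1 := by linear_combination (ω - 1) * hω2
  have hω1 : ω ≠ 1 := by
    intro h
    rw [h] at hω2
    norm_num at hω2
  have hω23 : (ω ^ 2) ^ 3 = 1 := by rw [← pow_mul, mul_comm, pow_mul, hω3, one_pow]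
  have hω21 : ω ^ 2 ≠ 1 := by
    intro h
    have hωm2 : ω = -2 := by linear_combination hω2 - h
    rw [hωm2] at h
    norm_num at h
  have hw : (C ω : Apoly) ^ 2 + C ω + 1 = 0 := by
    rw [← map_pow, ← map_one (C : ℂ →+* Apoly), ← map_add, ← map_add, hω2, map_zero]
  have hkey : ((X 0 - X 1) * ((X 0 - C ω * X 1) * (X 0 - C ω ^ 2 * X 1)) : Apoly)
      = (X 2 + X 3) * (X 2 ^ 2 - X 2 * X 3 + X 3 ^ 2)
        + (X 0 ^ 3 - X 1 ^ 3 - X 2 ^ 3 - X 3 ^ 3) := by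
    linear_combination (C ω * X 0 * X 1 ^ 2 - X 0 ^ 2 * X 1 - (C ω - 1) * X 1 ^ 3 : Apoly) * hw
  have hf0 : qmk fcubic = 0 :=
    Ideal.Quotient.eq_zero_iff_mem.mpr (Ideal.mem_span_singleton_self fcubic)
  have hdvd : qmk (X 2 + X 3 : Apoly)
      ∣ qmk (X 0 - X 1 : Apoly) * (qmk (X 0 - C ω * X 1 : Apoly)
        * qmk (X 0 - C ω ^ 2 * X 1 : Apoly)) := by
    refine ⟨qmk (X 2 ^ 2 - X 2 * X 3 + X 3 ^ 2 : Apoly), ?_⟩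
    rw [← map_mul, ← map_mul, ← map_mul, hkey, map_add]
    rw [show qmk (X 0 ^ 3 - X 1 ^ 3 - X 2 ^ 3 - X 3 ^ 3 : Apoly) = 0 from hf0, add_zero]
  have hprime : Prime (qmk (X 2 + X 3 : Apoly)) :=
    UniqueFactorizationMonoid.irreducible_iff_prime.mp x23_irred
  rcases hprime.2.2 _ _ hdvd with h1 | h'
  · refine not_dvd hω3 hω1 ?_
    have hC1 : (X 0 - C (1:ℂ) * X 1 : Apoly) = X 0 - X 1 := by rw [C_1, one_mul]
    rw [hC1]
    exact h1
  · rcases hprime.2.2 _ _ h' with h2 | h3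
    · exact not_dvd (one_pow 3) (fun h => hω1 h.symm) h2
    · refine not_dvd (one_pow 3) (fun h => hω21 h.symm) ?_
      rwa [C_pow]
end
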